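/- Let P be a formula-based program. Then the interpretation M_P is a fixed point of the immediate consequence operator: T_P(M_P) = M_P. -/

import Mathlib

/-!
Infinite-valued semantics for formula-based logic programs
(Rondogiannis–Wadge style), following Lüdecke,
"Every Formula-Based Logic Program Has a Least Infinite-Valued Model".
-/

noncomputable section

namespace ILP

attribute [local instance] Classical.propDecidable

/-- The first uncountable ordinal. -/
def omega1 : Ordinal.{0} := Ordinal.omega 1

lemma omega1_isLimit : Order.IsSuccLimit omega1 := Cardinal.isSuccLimit_omega 1

lemma zero_lt_omega1 : (0 : Ordinal) < omega1 := omega1_isLimit.pos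

lemma succ_lt_omega1 {a : Ordinal} (h : a < omega1) : a + 1 < omega1 := by
  rw [Ordinal.add_one_eq_succ]
  exact omega1_isLimit.succ_lt h

/-- Pre-truth-values: `F α`, `0`, `T α` for arbitrary ordinals `α`. -/
inductive TVPre : Type 1 where
  | F : Ordinal → TVPre
  | zero : TVPre
  | T : Ordinal → TVPre

/-- A pre-truth-value is countable if its index is a countable ordinal. -/
def TVPre.countable : TVPre → Prop
  | .F a => a < omega1
  | .zero => True
  | .T a => a < omega1

/-- The set `W` of truth values:
`F_α` (false values) for countable `α`, `0`, and `T_α` (true values) for countable `α`. -/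
def W : Type 1 := {v : TVPre // v.countable}

/-- The strict order on truth values:
`F_0 < F_1 < ... < 0 < ... < T_1 < T_0`. -/
def TVPre.lt : TVPre → TVPre → Prop
  | .F a, .F b => a < b
  | .F _, .zero => True
  | .F _, .T _ => True
  | .zero, .T _ => True
  | .T a, .T b => b < a
  | _, _ => False

instance : LT W := ⟨fun x y => TVPre.lt x.1 y.1⟩

instance : LE W := ⟨fun x y => x = y ∨ x < y⟩

lemma TVPre.lt_trans {a b c : TVPre} (hab : a.lt b) (hbc : b.lt c) : a.lt c := by
  cases a <;> cases b <;> cases c <;> simp_all [TVPre.lt] <;>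
    first | exact hab.trans hbc | exact hbc.trans hab

lemma TVPre.lt_irrefl {a : TVPre} (h : a.lt a) : False := by
  cases a <;> simp_all [TVPre.lt]

instance instLinearOrderW : LinearOrder W where
  le_refl a := Or.inl rfl
  le_trans a b c hab hbc := by
    rcases hab with rfl | hab
    · exact hbc
    rcases hbc with rfl | hbc
    · exact Or.inr hab
    · exact Or.inr (TVPre.lt_trans hab hbc)
  le_antisymm a b hab hba := by
    rcases hab with rfl | hab
    · rfl
    rcases hba with rfl | hba
    · rfl
    exact absurd (TVPre.lt_trans hab hba) TVPre.lt_irrefl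
  le_total a b := by
    obtain ⟨a1, ha⟩ := a
    obtain ⟨b1, hb⟩ := b
    have tri : a1 = b1 ∨ a1.lt b1 ∨ b1.lt a1 := by
      cases a1 <;> cases b1 <;> simp [TVPre.lt] <;> (try rename_i x y) <;>
        (try rcases lt_trichotomy x y with h | h | h) <;> tauto
    rcases tri with h | h | h
    · exact Or.inl (Or.inl (Subtype.ext h))
    · exact Or.inl (Or.inr h)
    · exact Or.inr (Or.inr h)
  lt_iff_le_not_ge a b := by
    constructor
    · intro h
      refine ⟨Or.inr h, ?_⟩
      rintro (rfl | h')
      · exact TVPre.lt_irrefl h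
      · exact TVPre.lt_irrefl (TVPre.lt_trans h h')
    · rintro ⟨rfl | h, h2⟩
      · exact absurd (Or.inl rfl) h2
      · exact h
  toDecidableLE := Classical.decRel _

/-- The false value `F_α`. -/
def WF (a : Ordinal) (h : a < omega1) : W := ⟨.F a, h⟩

/-- The true value `T_α`. -/
def WT (a : Ordinal) (h : a < omega1) : W := ⟨.T a, h⟩

/-- The undefined value `0`. -/
def WZ : W := ⟨.zero, trivial⟩

/-- `deg w < α` : the degree of `w` (which is `∞` for `0`) is less than `α`. -/
def degLT (w : W) (α : Ordinal) : Prop :=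
  match w.1 with
  | .F a => a < α
  | .zero => False
  | .T a => a < α

/-- The set of indices of true values occurring in `M`. -/
def TIdx (M : Set W) : Set Ordinal := {a | ∃ w ∈ M, w.1 = TVPre.T a}

/-- The set of indices of false values occurring in `M`. -/
def FIdx (M : Set W) : Set Ordinal := {a | ∃ w ∈ M, w.1 = TVPre.F a}

lemma mem_lt_omega1_of_TIdx {M : Set W} {a : Ordinal} (h : a ∈ TIdx M) : a < omega1 := by
  obtain ⟨w, _, hw⟩ := h
  have := w.2
  rw [hw] at this
  exact this

lemma mem_lt_omega1_of_FIdx {M : Set W} {a : Ordinal} (h : a ∈ FIdx M) : a < omega1 := by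
  obtain ⟨w, _, hw⟩ := h
  have := w.2
  rw [hw] at this
  exact this

/-- The least upper bound of a subset of `W`. -/
def Wsup (M : Set W) : W :=
  if h : (TIdx M).Nonempty then
    WT (sInf (TIdx M))
      (lt_of_le_of_lt (csInf_le' h.choose_spec) (mem_lt_omega1_of_TIdx h.choose_spec))
  else if WZ ∈ M then WZ
  else if h2 : sSup (FIdx M) < omega1 then WF (sSup (FIdx M)) h2
  else WZ

/-- The greatest lower bound of a subset of `W`. -/
def Winf (M : Set W) : W :=
  if h : (FIdx M).Nonempty then
    WF (sInf (FIdx M))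
      (lt_of_le_of_lt (csInf_le' h.choose_spec) (mem_lt_omega1_of_FIdx h.choose_spec))
  else if WZ ∈ M then WZ
  else if h2 : sSup (TIdx M) < omega1 then WT (sSup (TIdx M)) h2
  else WZ

/-- The semantics of negation on `W`. -/
def Wneg : W → W
  | ⟨.F a, h⟩ => WT (a + 1) (succ_lt_omega1 h)
  | ⟨.zero, _⟩ => WZ
  | ⟨.T a, h⟩ => WF (a + 1) (succ_lt_omega1 h)

/-! ### Syntax -/

/-- A first-order language with finitely many predicate symbols (at least one),
finitely many function symbols and finitely many constants (at least one). -/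
structure Language where
  nPred : ℕ
  predAr : Fin nPred → ℕ
  nFun : ℕ
  funAr : Fin nFun → ℕ
  nConst : ℕ
  npos : 1 ≤ nPred
  cpos : 1 ≤ nConst

variable {L : Language}

/-- Terms of the language; variables are indexed by natural numbers. -/
inductive Term (L : Language) : Type where
  | var : ℕ → Term L
  | const : Fin L.nConst → Term L
  | func : (f : Fin L.nFun) → (Fin (L.funAr f) → Term L) → Term L

/-- A term is ground if it contains no variables. -/
def Term.ground : Term L → Prop
  | .var _ => False
  | .const _ => True
  | .func _ ts => ∀ i, (ts i).ground

/-- The Herbrand universe: the set of ground terms. -/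
def HU (L : Language) : Type := {t : Term L // t.ground}

/-- Formulas of the language. -/
inductive Formula (L : Language) : Type where
  | verum : Formula L
  | falsum : Formula L
  | atom : (p : Fin L.nPred) → (Fin (L.predAr p) → Term L) → Formula L
  | neg : Formula L → Formula L
  | conj : Formula L → Formula L → Formula L
  | disj : Formula L → Formula L → Formula L
  | all : ℕ → Formula L → Formula L
  | ex : ℕ → Formula L → Formula L

/-- A ground atom: a predicate symbol applied to ground terms.
The Herbrand base `H_B` is the type of ground atoms. -/
structure GroundAtom (L : Language) : Type where
  pred : Fin L.nPred
  args : Fin (L.predAr pred) → HU L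

/-- An (infinite-valued Herbrand) interpretation. -/
def Interp (L : Language) : Type 1 := GroundAtom L → W

/-- Evaluation of a term under a variable assignment. -/
def Term.evalT (h : ℕ → HU L) : Term L → HU L
  | .var n => h n
  | .const c => ⟨.const c, trivial⟩
  | .func f ts => ⟨.func f fun i => ((ts i).evalT h).1, fun i => ((ts i).evalT h).2⟩

/-- The infinite-valued semantics of formulas, relative to an interpretation and
a variable assignment. -/
def Formula.eval (I : Interp L) : Formula L → (ℕ → HU L) → W
  | .verum, _ => WT 0 zero_lt_omega1
  | .falsum, _ => WF 0 zero_lt_omega1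
  | .atom p ts, h => I ⟨p, fun i => (ts i).evalT h⟩
  | .neg φ, h => Wneg (φ.eval I h)
  | .conj φ ψ, h => min (φ.eval I h) (ψ.eval I h)
  | .disj φ ψ, h => max (φ.eval I h) (ψ.eval I h)
  | .ex v φ, h => Wsup (Set.range fun u : HU L => φ.eval I (Function.update h v u))
  | .all v φ, h => Winf (Set.range fun u : HU L => φ.eval I (Function.update h v u))

/-- The variables occurring in a term. -/
def Term.vars : Term L → Set ℕ
  | .var n => {n}
  | .const _ => ∅
  | .func _ ts => ⋃ i, (ts i).vars

/-- The free variables of a formula. -/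
def Formula.freeVars : Formula L → Set ℕ
  | .verum => ∅
  | .falsum => ∅
  | .atom _ ts => ⋃ i, (ts i).vars
  | .neg φ => φ.freeVars
  | .conj φ ψ => φ.freeVars ∪ ψ.freeVars
  | .disj φ ψ => φ.freeVars ∪ ψ.freeVars
  | .all v φ => φ.freeVars \ {v}
  | .ex v φ => φ.freeVars \ {v}

/-- Applying a substitution to a term. -/
def Term.subst (σ : ℕ → Term L) : Term L → Term L
  | .var n => σ n
  | .const c => .const c
  | .func f ts => .func f fun i => (ts i).subst σ

/-- Applying a substitution to a formula (bound variables are not substituted). -/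
def Formula.subst (σ : ℕ → Term L) : Formula L → Formula L
  | .verum => .verum
  | .falsum => .falsum
  | .atom p ts => .atom p fun i => (ts i).subst σ
  | .neg φ => .neg (φ.subst σ)
  | .conj φ ψ => .conj (φ.subst σ) (ψ.subst σ)
  | .disj φ ψ => .disj (φ.subst σ) (ψ.subst σ)
  | .all v φ => .all v (φ.subst (Function.update σ v (Term.var v)))
  | .ex v φ => .ex v (φ.subst (Function.update σ v (Term.var v)))

/-- A formula-based rule `A ← φ`: the head is an atom `P(t₁,…,tₛ)`
(hence distinct from `⊤` and `⊥`) and the body is an arbitrary formula. -/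
structure Rule (L : Language) : Type where
  headPred : Fin L.nPred
  headArgs : Fin (L.predAr headPred) → Term L
  body : Formula L

/-- The head of a rule, as an atomic formula. -/
def Rule.headAtom (r : Rule L) : Formula L := .atom r.headPred r.headArgs

/-- A formula-based logic program: a finite set of formula-based rules. -/
structure Program (L : Language) : Type where
  rules : Set (Rule L)
  finite : rules.Finite

/-- The set `P_G` of ground instances of a program `P`: pairs `(Aσ, φσ)` obtained
from a rule `A ← φ` of `P` and a substitution `σ` such that `Aσ` is a ground atom
and `φσ` has no free variables. -/
def groundInstances (P : Program L) : Set (GroundAtom L × Formula L) :=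
  {Aφ | ∃ r ∈ P.rules, ∃ σ : ℕ → Term L,
    (∃ hg : ∀ i, ((r.headArgs i).subst σ).ground,
      Aφ.1 = ⟨r.headPred, fun i => ⟨(r.headArgs i).subst σ, hg i⟩⟩) ∧
    Aφ.2 = r.body.subst σ ∧ (r.body.subst σ).freeVars = ∅}

/-- A default variable assignment (possible since there is at least one constant). -/
def defaultAssignment (L : Language) : ℕ → HU L :=
  fun _ => ⟨.const ⟨0, L.cpos⟩, trivial⟩

/-- The value of a closed formula (independent of the variable assignment). -/
def Formula.evalClosed (I : Interp L) (φ : Formula L) : W :=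
  φ.eval I (defaultAssignment L)

/-- The immediate consequence operator `T_P`. -/
def TP (P : Program L) (I : Interp L) : Interp L :=
  fun A => Wsup {w | ∃ φ : Formula L, (A, φ) ∈ groundInstances P ∧ w = φ.evalClosed I}

/-- `I ∥ F_β` : the set of ground atoms receiving value `F_β` under `I`. -/
def Ifalse (I : Interp L) (β : Ordinal) : Set (GroundAtom L) := {A | (I A).1 = TVPre.F β}

/-- `I ∥ T_β` : the set of ground atoms receiving value `T_β` under `I`. -/
def Itrue (I : Interp L) (β : Ordinal) : Set (GroundAtom L) := {A | (I A).1 = TVPre.T β}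

/-- `I =_α J`. -/
def eqa (α : Ordinal) (I J : Interp L) : Prop :=
  ∀ β ≤ α, Ifalse I β = Ifalse J β ∧ Itrue I β = Itrue J β

/-- `I ⊑_α J`. -/
def sqa (α : Ordinal) (I J : Interp L) : Prop :=
  (∀ β < α, eqa β I J) ∧ Ifalse J α ⊆ Ifalse I α ∧ Itrue I α ⊆ Itrue J α

/-- `I ⊏_α J`. -/
def sqlt (α : Ordinal) (I J : Interp L) : Prop := sqa α I J ∧ ¬ eqa α I J

/-- `I ⊑_∞ J`. -/
def sqinf (I J : Interp L) : Prop := I = J ∨ ∃ α < omega1, sqlt α I J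

/-- `I` satisfies the rule `A ← φ`. -/
def satisfies (I : Interp L) (r : Rule L) : Prop :=
  ∀ h : ℕ → HU L, r.body.eval I h ≤ r.headAtom.eval I h

/-- `I` is a model of `P`. -/
def isModel (I : Interp L) (P : Program L) : Prop := ∀ r ∈ P.rules, satisfies I r

/-- The transfinite iterates `T^β_{P,α}(I)`. -/
def iter (P : Program L) (α : Ordinal) (hα : α < omega1) (I : Interp L)
    (β : Ordinal) : Interp L :=
  Ordinal.limitRecOn β I (fun _ J => TP P J)
    (fun β _ ih A =>
      if degLT (I A) α then I A
      else if ∃ γ, ∃ hγ : γ < β, (ih γ hγ A).1 = TVPre.T α then WT α hα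
      else if ∀ γ, ∀ hγ : γ < β, (ih γ hγ A).1 = TVPre.F α then WF α hα
      else WF (α + 1) (succ_lt_omega1 hα))

/-- The union `⊔_{γ<α} I_γ` of a family of interpretations. -/
def unionInterp (α : Ordinal) (hα : α < omega1) (Ig : ∀ γ, γ < α → Interp L) :
    Interp L := fun A =>
  if h : ∃ ζ, ∃ hζ : ζ < α, ((Ig ζ hζ) A).1 = TVPre.F ζ ∨ ((Ig ζ hζ) A).1 = TVPre.T ζ
  then Ig h.choose h.choose_spec.choose A
  else WF α hα

/-- The approximants `M_α` of a program `P`. -/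
def approx (P : Program L) (α : Ordinal) : Interp L :=
  if hα : α < omega1 then
    if (∀ γ, ∀ _ : γ < α, ∀ ζ, ζ < γ → eqa ζ (approx P ζ) (approx P γ)) ∧
        sqa α (unionInterp α hα fun γ _ => approx P γ)
          (TP P (unionInterp α hα fun γ _ => approx P γ))
    then iter P α hα (unionInterp α hα fun γ _ => approx P γ) omega1
    else fun _ => WF 0 zero_lt_omega1
  else fun _ => WF 0 zero_lt_omega1
termination_by α
decreasing_by
  all_goals first | assumption | exact lt_trans ‹_› ‹_›

/-- The depth `δ_P` of a program `P`. -/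
def depth (P : Program L) : Ordinal :=
  sInf {δ | δ < omega1 ∧ ∀ γ, δ ≤ γ → γ < omega1 →
    Ifalse (approx P γ) γ = ∅ ∧ Itrue (approx P γ) γ = ∅}

/-- The least infinite-valued model `M_P` of a program `P`. -/
def MP (P : Program L) : Interp L := fun A =>
  if degLT (approx P (depth P) A) (depth P) then approx P (depth P) A else WZ

/-! ### Three-valued semantics -/

/-- The three truth values `F < 0 < T`. -/
inductive TV3 : Type where
  | F : TV3
  | Z : TV3
  | T : TV3
deriving DecidableEq

/-- Numeric coding of the three truth values. -/
def TV3.toNat : TV3 → ℕ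
  | .F => 0
  | .Z => 1
  | .T => 2

instance : LinearOrder TV3 :=
  LinearOrder.lift' TV3.toNat (fun a b => by
    cases a <;> cases b <;> simp [TV3.toNat])

/-- A three-valued interpretation. -/
def Interp3 (L : Language) : Type := GroundAtom L → TV3

/-- Supremum of a set of three-valued truth values. -/
def sup3 (S : Set TV3) : TV3 :=
  if TV3.T ∈ S then .T else if TV3.Z ∈ S then .Z else .F

/-- Infimum of a set of three-valued truth values. -/
def inf3 (S : Set TV3) : TV3 :=
  if TV3.F ∈ S then .F else if TV3.Z ∈ S then .Z else .T

/-- Three-valued negation. -/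
def neg3 : TV3 → TV3
  | .F => .T
  | .Z => .Z
  | .T => .F

/-- The three-valued semantics of formulas. -/
def Formula.eval3 (K : Interp3 L) : Formula L → (ℕ → HU L) → TV3
  | .verum, _ => .T
  | .falsum, _ => .F
  | .atom p ts, h => K ⟨p, fun i => (ts i).evalT h⟩
  | .neg φ, h => neg3 (φ.eval3 K h)
  | .conj φ ψ, h => min (φ.eval3 K h) (ψ.eval3 K h)
  | .disj φ ψ, h => max (φ.eval3 K h) (ψ.eval3 K h)
  | .ex v φ, h => sup3 (Set.range fun u : HU L => φ.eval3 K (Function.update h v u))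
  | .all v φ, h => inf3 (Set.range fun u : HU L => φ.eval3 K (Function.update h v u))

/-- Collapsing all false values to `F` and all true values to `T`. -/
def collapse : W → TV3 := fun w =>
  match w.1 with
  | .F _ => .F
  | .zero => .Z
  | .T _ => .T

/-- The collapse of an infinite-valued interpretation. -/
def collapseI (I : Interp L) : Interp3 L := fun A => collapse (I A)

/-- `K` is a three-valued model of `P`. -/
def isModel3 (K : Interp3 L) (P : Program L) : Prop :=
  ∀ r ∈ P.rules, ∀ h : ℕ → HU L, r.body.eval3 K h ≤ r.headAtom.eval3 K h

/-- The three-valued interpretation `M_{P,3}`. -/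
def MP3 (P : Program L) : Interp3 L := collapseI (MP P)

/-- The negation degree of a formula. -/
def Formula.negDeg : Formula L → ℕ
  | .verum => 0
  | .falsum => 0
  | .atom _ _ => 0
  | .neg φ => φ.negDeg + 1
  | .conj φ ψ => max φ.negDeg ψ.negDeg
  | .disj φ ψ => max φ.negDeg ψ.negDeg
  | .all _ φ => φ.negDeg
  | .ex _ φ => φ.negDeg


section WBasics

lemma W.ext {v w : W} (h : v.1 = w.1) : v = w := Subtype.ext h

lemma W.cases3 (v : W) : (∃ a h, v = WF a h) ∨ v = WZ ∨ (∃ a h, v = WT a h) := by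
  obtain ⟨x, hx⟩ := v
  cases x with
  | F a => exact Or.inl ⟨a, hx, rfl⟩
  | zero => exact Or.inr (Or.inl rfl)
  | T a => exact Or.inr (Or.inr ⟨a, hx, rfl⟩)

@[simp] lemma fst_WF {a h} : (WF a h).1 = TVPre.F a := rfl
@[simp] lemma fst_WT {a h} : (WT a h).1 = TVPre.T a := rfl
@[simp] lemma fst_WZ : (WZ).1 = TVPre.zero := rfl

@[simp] lemma WF_eq_WF {a b h h'} : WF a h = WF b h' ↔ a = b := by
  constructor
  · intro hh; injection (congrArg Subtype.val hh)
  · rintro rfl; rfl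

@[simp] lemma WT_eq_WT {a b h h'} : WT a h = WT b h' ↔ a = b := by
  constructor
  · intro hh; injection (congrArg Subtype.val hh)
  · rintro rfl; rfl

@[simp] lemma WF_ne_WT {a b h h'} : WF a h ≠ WT b h' := by
  intro hh; injection (congrArg Subtype.val hh)
@[simp] lemma WT_ne_WF {a b h h'} : WT a h ≠ WF b h' := by
  intro hh; injection (congrArg Subtype.val hh)
@[simp] lemma WF_ne_WZ {a h} : WF a h ≠ WZ := by
  intro hh; injection (congrArg Subtype.val hh)
@[simp] lemma WZ_ne_WF {a h} : WZ ≠ WF a h := by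
  intro hh; injection (congrArg Subtype.val hh)
@[simp] lemma WT_ne_WZ {a h} : WT a h ≠ WZ := by
  intro hh; injection (congrArg Subtype.val hh)
@[simp] lemma WZ_ne_WT {a h} : WZ ≠ WT a h := by
  intro hh; injection (congrArg Subtype.val hh)

lemma lt_omega1_of_fst_F {v : W} {a : Ordinal} (h : v.1 = TVPre.F a) : a < omega1 := by
  have := v.2; rw [h] at this; exact this
lemma lt_omega1_of_fst_T {v : W} {a : Ordinal} (h : v.1 = TVPre.T a) : a < omega1 := by
  have := v.2; rw [h] at this; exact this
lemma eq_WF_of_fst {v : W} {a : Ordinal} (h : v.1 = TVPre.F a) :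
    v = WF a (lt_omega1_of_fst_F h) := W.ext h
lemma eq_WT_of_fst {v : W} {a : Ordinal} (h : v.1 = TVPre.T a) :
    v = WT a (lt_omega1_of_fst_T h) := W.ext h
lemma eq_WZ_of_fst {v : W} (h : v.1 = TVPre.zero) : v = WZ := W.ext h

lemma lt_iff_TVPre_lt {v w : W} : v < w ↔ TVPre.lt v.1 w.1 := Iff.rfl
lemma le_iff' {v w : W} : v ≤ w ↔ v = w ∨ v < w := Iff.rfl

@[simp] lemma WF_lt_WF {a b h h'} : WF a h < WF b h' ↔ a < b := Iff.rfl
@[simp] lemma WF_lt_WZ {a h} : WF a h < WZ := trivial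
@[simp] lemma WF_lt_WT {a b h h'} : WF a h < WT b h' := trivial
@[simp] lemma WZ_lt_WT {a h} : WZ < WT a h := trivial
@[simp] lemma WT_lt_WT {a b h h'} : WT a h < WT b h' ↔ b < a := Iff.rfl
@[simp] lemma not_WZ_lt_WF {a h} : ¬ WZ < WF a h := fun hh => hh
@[simp] lemma not_WT_lt_WF {a b h h'} : ¬ WT a h < WF b h' := fun hh => hh
@[simp] lemma not_WT_lt_WZ {a h} : ¬ WT a h < WZ := fun hh => hh
@[simp] lemma not_WZ_lt_WZ : ¬ (WZ : W) < WZ := fun hh => hh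

@[simp] lemma WF_le_WF {a b h h'} : WF a h ≤ WF b h' ↔ a ≤ b := by
  rw [le_iff', le_iff_lt_or_eq]
  simp [or_comm]
@[simp] lemma WF_le_WZ {a h} : WF a h ≤ WZ := Or.inr trivial
@[simp] lemma WF_le_WT {a b h h'} : WF a h ≤ WT b h' := Or.inr trivial
@[simp] lemma WZ_le_WT {a h} : (WZ : W) ≤ WT a h := Or.inr trivial
@[simp] lemma WZ_le_WZ : (WZ : W) ≤ WZ := le_refl _
@[simp] lemma WT_le_WT {a b h h'} : WT a h ≤ WT b h' ↔ b ≤ a := by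
  rw [le_iff', le_iff_lt_or_eq]
  simp [or_comm, eq_comm]
@[simp] lemma not_WZ_le_WF {a h} : ¬ (WZ : W) ≤ WF a h := by
  rintro (hh | hh)
  · exact WZ_ne_WF hh
  · exact hh
@[simp] lemma not_WT_le_WF {a b h h'} : ¬ WT a h ≤ WF b h' := by
  rintro (hh | hh)
  · exact WT_ne_WF hh
  · exact hh
@[simp] lemma not_WT_le_WZ {a h} : ¬ WT a h ≤ WZ := by
  rintro (hh | hh)
  · exact WT_ne_WZ hh
  · exact hh

end WBasics
section Rel

/-- `v` has degree at least `α`. -/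
def Hi (α : Ordinal) (v : W) : Prop :=
  match v.1 with
  | .F a => α ≤ a
  | .zero => True
  | .T a => α ≤ a

@[simp] lemma Hi_WF {α a h} : Hi α (WF a h) ↔ α ≤ a := Iff.rfl
@[simp] lemma Hi_WZ {α} : Hi α WZ := trivial
@[simp] lemma Hi_WT {α a h} : Hi α (WT a h) ↔ α ≤ a := Iff.rfl

/-- Pointwise version of `⊑_α`. -/
def sub (α : Ordinal) (v w : W) : Prop :=
  (v = w ∨ (Hi α v ∧ Hi α w)) ∧ (w.1 = TVPre.F α → v.1 = TVPre.F α) ∧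
    (v.1 = TVPre.T α → w.1 = TVPre.T α)

/-- Pointwise version of `=_α`. -/
def mat (α : Ordinal) (v w : W) : Prop := sub α v w ∧ sub α w v

lemma sub_refl {α v} : sub α v v := ⟨Or.inl rfl, id, id⟩

lemma mat_refl {α v} : mat α v v := ⟨sub_refl, sub_refl⟩

lemma sub_trans {α} {u v w : W} (h1 : sub α u v) (h2 : sub α v w) : sub α u w := by
  refine ⟨?_, fun hw => h1.2.1 (h2.2.1 hw), fun hu => h2.2.2 (h1.2.2 hu)⟩
  rcases h1.1 with rfl | ⟨hu, hv⟩
  · exact h2.1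
  · rcases h2.1 with rfl | ⟨_, hw⟩
    · exact Or.inr ⟨hu, hv⟩
    · exact Or.inr ⟨hu, hw⟩

lemma mat_symm {α} {v w : W} (h : mat α v w) : mat α w v := ⟨h.2, h.1⟩

lemma mat_trans {α} {u v w : W} (h1 : mat α u v) (h2 : mat α v w) : mat α u w :=
  ⟨sub_trans h1.1 h2.1, sub_trans h2.2 h1.2⟩

lemma Hi_mono {α β} {v : W} (h : α ≤ β) (hv : Hi β v) : Hi α v := by
  rcases W.cases3 v with ⟨a, ha, rfl⟩ | rfl | ⟨a, ha, rfl⟩ <;> simp_all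
  · exact h.trans hv
  · exact h.trans hv

lemma not_F_of_Hi {γ β} {v : W} (hv : Hi γ v) (h : β < γ) : v.1 ≠ TVPre.F β := by
  rcases W.cases3 v with ⟨a, ha, rfl⟩ | rfl | ⟨a, ha, rfl⟩ <;> simp_all
  rintro rfl; exact absurd hv (not_le.2 h)

lemma not_T_of_Hi {γ β} {v : W} (hv : Hi γ v) (h : β < γ) : v.1 ≠ TVPre.T β := by
  rcases W.cases3 v with ⟨a, ha, rfl⟩ | rfl | ⟨a, ha, rfl⟩ <;> simp_all
  rintro rfl; exact absurd hv (not_le.2 h)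

lemma Hi_succ_iff {α} {v : W} :
    Hi (α + 1) v ↔ Hi α v ∧ v.1 ≠ TVPre.F α ∧ v.1 ≠ TVPre.T α := by
  rcases W.cases3 v with ⟨a, ha, rfl⟩ | rfl | ⟨a, ha, rfl⟩ <;>
    simp [Order.add_one_le_iff, lt_iff_le_and_ne, eq_comm]

lemma mat_iff {α} {v w : W} : mat α v w ↔ v = w ∨ (Hi (α + 1) v ∧ Hi (α + 1) w) := by
  constructor
  · rintro ⟨h1, h2⟩
    rcases h1.1 with rfl | ⟨hv, hw⟩
    · exact Or.inl rfl
    by_cases hFv : v.1 = TVPre.F α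
    · exact Or.inl (W.ext (hFv.trans (h2.2.1 hFv).symm))
    by_cases hTv : v.1 = TVPre.T α
    · exact Or.inl (W.ext (hTv.trans (h1.2.2 hTv).symm))
    by_cases hFw : w.1 = TVPre.F α
    · exact absurd (h1.2.1 hFw) hFv
    by_cases hTw : w.1 = TVPre.T α
    · exact absurd (h2.2.2 hTw) hTv
    · exact Or.inr ⟨Hi_succ_iff.2 ⟨hv, hFv, hTv⟩, Hi_succ_iff.2 ⟨hw, hFw, hTw⟩⟩
  · rintro (rfl | ⟨hv, hw⟩)
    · exact mat_refl
    have lt : α < α + 1 := by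
      rw [Ordinal.add_one_eq_succ]; exact Order.lt_succ α
    have le : α ≤ α + 1 := le_of_lt lt
    exact ⟨⟨Or.inr ⟨Hi_mono le hv, Hi_mono le hw⟩,
        fun hh => absurd hh (not_F_of_Hi hw lt), fun hh => absurd hh (not_T_of_Hi hv lt)⟩,
      ⟨Or.inr ⟨Hi_mono le hw, Hi_mono le hv⟩,
        fun hh => absurd hh (not_F_of_Hi hv lt), fun hh => absurd hh (not_T_of_Hi hw lt)⟩⟩

lemma mat_mono {α β} {v w : W} (h : β ≤ α) (hm : mat α v w) : mat β v w := by
  rcases mat_iff.1 hm with rfl | ⟨hv, hw⟩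
  · exact mat_refl
  · exact mat_iff.2 (Or.inr ⟨Hi_mono (add_le_add_left h 1) hv,
      Hi_mono (add_le_add_left h 1) hw⟩)

lemma mat_of_sub_lt {α β} {v w : W} (h : β < α) (hs : sub α v w) : mat β v w := by
  rcases hs.1 with rfl | ⟨hv, hw⟩
  · exact mat_refl
  · have : β + 1 ≤ α := by
      rw [Ordinal.add_one_eq_succ]; exact Order.succ_le_of_lt h
    exact mat_iff.2 (Or.inr ⟨Hi_mono this hv, Hi_mono this hw⟩)

lemma sub_of_mat {α} {v w : W} (h : mat α v w) : sub α v w := h.1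

/-- If `v = w` or both are ≥ level `α+1`, they match at level `α`. -/
lemma mat_eq_of_lo {α} {v w : W} (h : mat α v w) {β} (hβ : β ≤ α) :
    ((v.1 = TVPre.F β ↔ w.1 = TVPre.F β) ∧ (v.1 = TVPre.T β ↔ w.1 = TVPre.T β)) := by
  rcases mat_iff.1 h with rfl | ⟨hv, hw⟩
  · exact ⟨Iff.rfl, Iff.rfl⟩
  · have hβ' : β < α + 1 := by
      rw [Ordinal.add_one_eq_succ]; exact Order.lt_succ_of_le hβ
    exact ⟨⟨fun hh => absurd hh (not_F_of_Hi hv hβ'), fun hh => absurd hh (not_F_of_Hi hw hβ')⟩,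
      ⟨fun hh => absurd hh (not_T_of_Hi hv hβ'), fun hh => absurd hh (not_T_of_Hi hw hβ')⟩⟩

lemma mat_eq_of_deg_lt {α} {v w : W} (h : mat α v w) (hv : ¬ Hi (α+1) v) : v = w := by
  rcases mat_iff.1 h with rfl | ⟨h1, _⟩
  · rfl
  · exact absurd h1 hv

lemma mat_of_classes {α} {v w : W}
    (hF : ∀ β ≤ α, (v.1 = TVPre.F β ↔ w.1 = TVPre.F β))
    (hT : ∀ β ≤ α, (v.1 = TVPre.T β ↔ w.1 = TVPre.T β)) : mat α v w := by
  have hs : ∀ a : Ordinal, ¬ a ≤ α → α + 1 ≤ a := fun a ha => by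
    rw [Ordinal.add_one_eq_succ]; exact Order.succ_le_of_lt (not_le.1 ha)
  rw [mat_iff]
  rcases W.cases3 v with ⟨a, ha, rfl⟩ | rfl | ⟨a, ha, rfl⟩ <;>
    rcases W.cases3 w with ⟨b, hb, rfl⟩ | rfl | ⟨b, hb, rfl⟩
  · by_cases haa : a ≤ α
    · have := (hF a haa).1 rfl
      simp only [fst_WF, TVPre.F.injEq] at this
      subst this; simp
    · by_cases hbb : b ≤ α
      · have := (hF b hbb).2 rfl
        simp only [fst_WF, TVPre.F.injEq] at this
        subst this; simp
      · exact Or.inr ⟨hs a haa, hs b hbb⟩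
  · by_cases haa : a ≤ α
    · have := (hF a haa).1 rfl; simp at this
    · exact Or.inr ⟨hs a haa, trivial⟩
  · by_cases haa : a ≤ α
    · have := (hF a haa).1 rfl; simp at this
    · by_cases hbb : b ≤ α
      · have := (hT b hbb).2 rfl; simp at this
      · exact Or.inr ⟨hs a haa, hs b hbb⟩
  · by_cases hbb : b ≤ α
    · have := (hF b hbb).2 rfl; simp at this
    · exact Or.inr ⟨trivial, hs b hbb⟩
  · simp
  · by_cases hbb : b ≤ α
    · have := (hT b hbb).2 rfl; simp at this
    · exact Or.inr ⟨trivial, hs b hbb⟩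
  · by_cases haa : a ≤ α
    · have := (hT a haa).1 rfl; simp at this
    · by_cases hbb : b ≤ α
      · have := (hF b hbb).2 rfl; simp at this
      · exact Or.inr ⟨hs a haa, hs b hbb⟩
  · by_cases haa : a ≤ α
    · have := (hT a haa).1 rfl; simp at this
    · exact Or.inr ⟨hs a haa, trivial⟩
  · by_cases haa : a ≤ α
    · have := (hT a haa).1 rfl
      simp only [fst_WT, TVPre.T.injEq] at this
      subst this; simp
    · by_cases hbb : b ≤ α
      · have := (hT b hbb).2 rfl
        simp only [fst_WT, TVPre.T.injEq] at this
        subst this; simp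
      · exact Or.inr ⟨hs a haa, hs b hbb⟩

lemma sub_of_classes {α} {v w : W}
    (hF : ∀ β < α, (v.1 = TVPre.F β ↔ w.1 = TVPre.F β))
    (hT : ∀ β < α, (v.1 = TVPre.T β ↔ w.1 = TVPre.T β))
    (hFα : w.1 = TVPre.F α → v.1 = TVPre.F α)
    (hTα : v.1 = TVPre.T α → w.1 = TVPre.T α) : sub α v w := by
  refine ⟨?_, hFα, hTα⟩
  rcases W.cases3 v with ⟨a, ha, rfl⟩ | rfl | ⟨a, ha, rfl⟩ <;>
    rcases W.cases3 w with ⟨b, hb, rfl⟩ | rfl | ⟨b, hb, rfl⟩ <;>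
    simp only [Hi_WF, Hi_WZ, Hi_WT, and_true, true_and]
  · by_cases haa : a < α
    · have := (hF a haa).1 rfl
      simp only [fst_WF, TVPre.F.injEq] at this
      subst this; simp
    · by_cases hbb : b < α
      · have := (hF b hbb).2 rfl
        simp only [fst_WF, TVPre.F.injEq] at this
        subst this; simp
      · exact Or.inr ⟨not_lt.1 haa, not_lt.1 hbb⟩
  · by_cases haa : a < α
    · have := (hF a haa).1 rfl; simp at this
    · exact Or.inr (not_lt.1 haa)
  · by_cases haa : a < α
    · have := (hF a haa).1 rfl; simp at this
    · by_cases hbb : b < α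
      · have := (hT b hbb).2 rfl; simp at this
      · exact Or.inr ⟨not_lt.1 haa, not_lt.1 hbb⟩
  · by_cases hbb : b < α
    · have := (hF b hbb).2 rfl; simp at this
    · exact Or.inr (not_lt.1 hbb)
  · simp
  · by_cases hbb : b < α
    · have := (hT b hbb).2 rfl; simp at this
    · exact Or.inr (not_lt.1 hbb)
  · by_cases haa : a < α
    · have := (hT a haa).1 rfl; simp at this
    · by_cases hbb : b < α
      · have := (hF b hbb).2 rfl; simp at this
      · exact Or.inr ⟨not_lt.1 haa, not_lt.1 hbb⟩
  · by_cases haa : a < α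
    · have := (hT a haa).1 rfl; simp at this
    · exact Or.inr (not_lt.1 haa)
  · by_cases haa : a < α
    · have := (hT a haa).1 rfl
      simp only [fst_WT, TVPre.T.injEq] at this
      subst this; simp
    · by_cases hbb : b < α
      · have := (hT b hbb).2 rfl
        simp only [fst_WT, TVPre.T.injEq] at this
        subst this; simp
      · exact Or.inr ⟨not_lt.1 haa, not_lt.1 hbb⟩

lemma sub_classes_lt {α} {v w : W} (h : sub α v w) {β} (hβ : β < α) :
    ((v.1 = TVPre.F β ↔ w.1 = TVPre.F β) ∧ (v.1 = TVPre.T β ↔ w.1 = TVPre.T β)) :=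
  mat_eq_of_lo (mat_of_sub_lt hβ h) le_rfl

lemma eqa_iff {L : Language} {α} {I J : Interp L} :
    eqa α I J ↔ ∀ A, mat α (I A) (J A) := by
  constructor
  · intro h A
    refine mat_of_classes (fun β hβ => ?_) (fun β hβ => ?_)
    · constructor
      · intro hh
        have hm : A ∈ Ifalse I β := hh
        rw [(h β hβ).1] at hm; exact hm
      · intro hh
        have hm : A ∈ Ifalse J β := hh
        rw [← (h β hβ).1] at hm; exact hm
    · constructor
      · intro hh
        have hm : A ∈ Itrue I β := hh
        rw [(h β hβ).2] at hm; exact hm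
      · intro hh
        have hm : A ∈ Itrue J β := hh
        rw [← (h β hβ).2] at hm; exact hm
  · intro h β hβ
    constructor <;> ext A
    · exact (mat_eq_of_lo (h A) hβ).1
    · exact (mat_eq_of_lo (h A) hβ).2

lemma sqa_iff {L : Language} {α} {I J : Interp L} :
    sqa α I J ↔ ∀ A, sub α (I A) (J A) := by
  constructor
  · rintro ⟨h1, h2, h3⟩ A
    refine sub_of_classes (fun β hβ => (eqa_iff.1 (h1 β hβ) A |> mat_eq_of_lo) le_rfl |>.1)
      (fun β hβ => (eqa_iff.1 (h1 β hβ) A |> mat_eq_of_lo) le_rfl |>.2)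
      (fun hh => h2 hh) (fun hh => h3 hh)
  · intro h
    refine ⟨fun β hβ => eqa_iff.2 fun A => mat_of_sub_lt hβ (h A), ?_, ?_⟩
    · intro A hA; exact (h A).2.1 hA
    · intro A hA; exact (h A).2.2 hA

lemma eqa_refl {L : Language} {α} {I : Interp L} : eqa α I I :=
  eqa_iff.2 fun _ => mat_refl
lemma eqa_symm {L : Language} {α} {I J : Interp L} (h : eqa α I J) : eqa α J I :=
  eqa_iff.2 fun A => mat_symm (eqa_iff.1 h A)
lemma eqa_trans {L : Language} {α} {I J K : Interp L} (h1 : eqa α I J) (h2 : eqa α J K) :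
    eqa α I K :=
  eqa_iff.2 fun A => mat_trans (eqa_iff.1 h1 A) (eqa_iff.1 h2 A)
lemma sqa_refl {L : Language} {α} {I : Interp L} : sqa α I I :=
  sqa_iff.2 fun _ => sub_refl
lemma sqa_trans {L : Language} {α} {I J K : Interp L} (h1 : sqa α I J) (h2 : sqa α J K) :
    sqa α I K :=
  sqa_iff.2 fun A => sub_trans (sqa_iff.1 h1 A) (sqa_iff.1 h2 A)

end Rel
section Ops

/-- Duality on `W`, swapping `F` and `T`. -/
def Wdual (v : W) : W :=
  match v with
  | ⟨.F a, h⟩ => ⟨.T a, h⟩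
  | ⟨.zero, h⟩ => ⟨.zero, h⟩
  | ⟨.T a, h⟩ => ⟨.F a, h⟩

@[simp] lemma Wdual_WF {a h} : Wdual (WF a h) = WT a h := rfl
@[simp] lemma Wdual_WZ : Wdual WZ = WZ := rfl
@[simp] lemma Wdual_WT {a h} : Wdual (WT a h) = WF a h := rfl

@[simp] lemma Wdual_invol (v : W) : Wdual (Wdual v) = v := by
  rcases W.cases3 v with ⟨a, ha, rfl⟩ | rfl | ⟨a, ha, rfl⟩ <;> simp

lemma Wdual_inj {v w : W} (h : Wdual v = Wdual w) : v = w := by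
  have := congrArg Wdual h; simpa using this

@[simp] lemma Wdual_le {v w : W} : Wdual v ≤ Wdual w ↔ w ≤ v := by
  rcases W.cases3 v with ⟨a, ha, rfl⟩ | rfl | ⟨a, ha, rfl⟩ <;>
    rcases W.cases3 w with ⟨b, hb, rfl⟩ | rfl | ⟨b, hb, rfl⟩ <;> simp

@[simp] lemma Hi_dual {α} {v : W} : Hi α (Wdual v) ↔ Hi α v := by
  rcases W.cases3 v with ⟨a, ha, rfl⟩ | rfl | ⟨a, ha, rfl⟩ <;> simp

lemma Wdual_fst_F {α} {v : W} : (Wdual v).1 = TVPre.F α ↔ v.1 = TVPre.T α := by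
  rcases W.cases3 v with ⟨a, ha, rfl⟩ | rfl | ⟨a, ha, rfl⟩ <;> simp

lemma Wdual_fst_T {α} {v : W} : (Wdual v).1 = TVPre.T α ↔ v.1 = TVPre.F α := by
  rcases W.cases3 v with ⟨a, ha, rfl⟩ | rfl | ⟨a, ha, rfl⟩ <;> simp

lemma sub_dual {α} {v w : W} : sub α (Wdual w) (Wdual v) ↔ sub α v w := by
  unfold sub
  rw [Wdual_fst_F, Wdual_fst_F, Wdual_fst_T, Wdual_fst_T, Hi_dual, Hi_dual]
  constructor
  · rintro ⟨h1, h2, h3⟩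
    refine ⟨?_, fun hh => h3 hh, fun hh => h2 hh⟩
    rcases h1 with hh | ⟨hw, hv⟩
    · exact Or.inl (Wdual_inj hh).symm
    · exact Or.inr ⟨hv, hw⟩
  · rintro ⟨h1, h2, h3⟩
    refine ⟨?_, fun hh => h3 hh, fun hh => h2 hh⟩
    rcases h1 with rfl | ⟨hv, hw⟩
    · exact Or.inl rfl
    · exact Or.inr ⟨hw, hv⟩

lemma Wdual_min (v w : W) : Wdual (min v w) = max (Wdual v) (Wdual w) := by
  rcases le_total v w with h | h
  · rw [min_eq_left h, max_eq_left (Wdual_le.2 h)]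
  · rw [min_eq_right h, max_eq_right (Wdual_le.2 h)]

lemma Wdual_max (v w : W) : Wdual (max v w) = min (Wdual v) (Wdual w) := by
  rcases le_total v w with h | h
  · rw [max_eq_right h, min_eq_right (Wdual_le.2 h)]
  · rw [max_eq_left h, min_eq_left (Wdual_le.2 h)]

lemma not_Hi_iff {α} {u : W} :
    ¬ Hi α u ↔ ∃ β < α, (u.1 = TVPre.F β ∨ u.1 = TVPre.T β) := by
  rcases W.cases3 u with ⟨a, ha, rfl⟩ | rfl | ⟨a, ha, rfl⟩ <;> simp [not_le]

lemma lt_WF_iff {β h} {u : W} : u < WF β h ↔ ∃ γ < β, u.1 = TVPre.F γ := by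
  rcases W.cases3 u with ⟨a, ha, rfl⟩ | rfl | ⟨a, ha, rfl⟩ <;> simp

lemma WT_le_iff {β h} {u : W} : WT β h ≤ u ↔ ∃ γ ≤ β, u.1 = TVPre.T γ := by
  rcases W.cases3 u with ⟨a, ha, rfl⟩ | rfl | ⟨a, ha, rfl⟩ <;> simp

/-- classes below `α` transfer along `sub` in both directions (bundled form). -/
abbrev LoBicond (α : Ordinal) (v w : W) : Prop :=
  ∀ γ < α, (v.1 = TVPre.F γ ↔ w.1 = TVPre.F γ) ∧ (v.1 = TVPre.T γ ↔ w.1 = TVPre.T γ)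

lemma lobicond_of_sub {α} {v w : W} (h : sub α v w) : LoBicond α v w :=
  fun γ hγ => sub_classes_lt h hγ

lemma min_eq_of_lo_first {α} {v₁ w₁ v₂ w₂ : W}
    (m1 : LoBicond α v₁ w₁) (m2 : LoBicond α v₂ w₂) (hv : v₁ ≤ v₂) {β} (hβ : β < α)
    (hlow : v₁.1 = TVPre.F β ∨ v₁.1 = TVPre.T β) : min v₁ v₂ = min w₁ w₂ := by
  rcases hlow with hF | hT
  · have hw₁ : w₁.1 = TVPre.F β := ((m1 β hβ).1).1 hF
    have hww : w₁ ≤ w₂ := by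
      by_contra hc
      have hlt : w₂ < w₁ := not_le.1 hc
      rw [eq_WF_of_fst hw₁] at hlt
      obtain ⟨γ, hγβ, hw₂⟩ := lt_WF_iff.1 hlt
      have hv₂ : v₂.1 = TVPre.F γ := ((m2 γ (hγβ.trans hβ)).1).2 hw₂
      have : v₂ < v₁ := by
        rw [eq_WF_of_fst hv₂, eq_WF_of_fst hF]; exact hγβ
      exact absurd hv (not_le.2 this)
    rw [min_eq_left hv, min_eq_left hww]
    exact W.ext (hF.trans hw₁.symm)
  · have hw₁ : w₁.1 = TVPre.T β := ((m1 β hβ).2).1 hT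
    rw [eq_WT_of_fst hT] at hv
    obtain ⟨γ, hγβ, hv₂⟩ := WT_le_iff.1 hv
    have hw₂ : w₂.1 = TVPre.T γ := ((m2 γ (lt_of_le_of_lt hγβ hβ)).2).1 hv₂
    have hww : w₁ ≤ w₂ := by
      rw [eq_WT_of_fst hw₁, eq_WT_of_fst hw₂]; simpa using hγβ
    have hvv : v₁ ≤ v₂ := by
      rw [eq_WT_of_fst hT, eq_WT_of_fst hv₂]; simpa using hγβ
    rw [min_eq_left hvv, min_eq_left hww]
    exact W.ext (hT.trans hw₁.symm)

lemma min_eq_of_lo {α} {v₁ w₁ v₂ w₂ : W}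
    (m1 : LoBicond α v₁ w₁) (m2 : LoBicond α v₂ w₂)
    (hlo : ¬ Hi α (min v₁ v₂)) : min v₁ v₂ = min w₁ w₂ := by
  obtain ⟨β, hβ, hlow⟩ := not_Hi_iff.1 hlo
  rcases min_cases v₁ v₂ with ⟨he, hle⟩ | ⟨he, hlt⟩
  · exact min_eq_of_lo_first m1 m2 hle hβ (by rw [← he]; exact hlow)
  · rw [min_comm v₁ v₂, min_comm w₁ w₂]
    exact min_eq_of_lo_first m2 m1 hlt.le hβ (by rw [← he]; exact hlow)

lemma Hi_min {α} {v u : W} (hv : Hi α v) (hu : Hi α u) : Hi α (min v u) := by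
  rcases min_cases v u with ⟨he, _⟩ | ⟨he, _⟩ <;> rw [he] <;> assumption

lemma sub_min {α} {v₁ w₁ v₂ w₂ : W} (h1 : sub α v₁ w₁) (h2 : sub α v₂ w₂) :
    sub α (min v₁ v₂) (min w₁ w₂) := by
  have m1 := lobicond_of_sub h1
  have m2 := lobicond_of_sub h2
  refine ⟨?_, ?_, ?_⟩
  · by_cases hv : Hi α (min v₁ v₂)
    · by_cases hw : Hi α (min w₁ w₂)
      · exact Or.inr ⟨hv, hw⟩
      · refine Or.inl ?_
        have := min_eq_of_lo (fun γ hγ => ⟨((m1 γ hγ).1).symm, ((m1 γ hγ).2).symm⟩)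
          (fun γ hγ => ⟨((m2 γ hγ).1).symm, ((m2 γ hγ).2).symm⟩) hw
        exact this.symm
    · exact Or.inl (min_eq_of_lo m1 m2 hv)
  · -- F_α back-transfer
    intro hF
    have key : ∀ (v₁ w₁ v₂ w₂ : W), sub α v₁ w₁ → sub α v₂ w₂ → w₁ ≤ w₂ →
        (min w₁ w₂).1 = TVPre.F α → (min v₁ v₂).1 = TVPre.F α := by
      intro v₁ w₁ v₂ w₂ h1 h2 hww hF
      rw [min_eq_left hww] at hF
      have hv₁ : v₁.1 = TVPre.F α := h1.2.1 hF
      have hvv : v₁ ≤ v₂ := by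
        by_contra hc
        have hlt : v₂ < v₁ := not_le.1 hc
        rw [eq_WF_of_fst hv₁] at hlt
        obtain ⟨γ, hγ, hv₂⟩ := lt_WF_iff.1 hlt
        have hw₂ : w₂.1 = TVPre.F γ := ((sub_classes_lt h2 hγ).1).1 hv₂
        have : w₂ < w₁ := by
          rw [eq_WF_of_fst hw₂, eq_WF_of_fst hF]; exact hγ
        exact absurd hww (not_le.2 this)
      rw [min_eq_left hvv]; exact hv₁
    rcases le_total w₁ w₂ with hww | hww
    · exact key _ _ _ _ h1 h2 hww hF
    · rw [min_comm v₁ v₂]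
      rw [min_comm w₁ w₂] at hF
      exact key _ _ _ _ h2 h1 hww hF
  · -- T_α forward transfer
    intro hT
    have key : ∀ (v₁ w₁ v₂ w₂ : W), sub α v₁ w₁ → sub α v₂ w₂ → v₁ ≤ v₂ →
        (min v₁ v₂).1 = TVPre.T α → (min w₁ w₂).1 = TVPre.T α := by
      intro v₁ w₁ v₂ w₂ h1 h2 hvv hT
      rw [min_eq_left hvv] at hT
      have hw₁ : w₁.1 = TVPre.T α := h1.2.2 hT
      rw [eq_WT_of_fst hT] at hvv
      obtain ⟨γ, hγ, hv₂⟩ := WT_le_iff.1 hvv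
      rcases lt_or_eq_of_le hγ with hγlt | heq
      · have hw₂ : w₂.1 = TVPre.T γ := ((sub_classes_lt h2 hγlt).2).1 hv₂
        have hww : w₁ ≤ w₂ := by
          rw [eq_WT_of_fst hw₁, eq_WT_of_fst hw₂]; simpa using hγ
        rw [min_eq_left hww]; exact hw₁
      · have hv₂' : v₂.1 = TVPre.T α := by rw [heq] at hv₂; exact hv₂
        have hw₂ : w₂.1 = TVPre.T α := h2.2.2 hv₂'
        rcases min_cases w₁ w₂ with ⟨he, _⟩ | ⟨he, _⟩ <;> rw [he] <;> assumption
    rcases le_total v₁ v₂ with hvv | hvv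
    · exact key _ _ _ _ h1 h2 hvv hT
    · rw [min_comm w₁ w₂]
      rw [min_comm v₁ v₂] at hT
      exact key _ _ _ _ h2 h1 hvv hT

lemma sub_max {α} {v₁ w₁ v₂ w₂ : W} (h1 : sub α v₁ w₁) (h2 : sub α v₂ w₂) :
    sub α (max v₁ v₂) (max w₁ w₂) := by
  have := sub_min (sub_dual.2 h1) (sub_dual.2 h2)
  rw [← Wdual_max, ← Wdual_max] at this
  exact sub_dual.1 this

lemma sub_neg {α} {v w : W} (h : sub α v w) : sub α (Wneg v) (Wneg w) := by
  rcases h.1 with rfl | ⟨hv, hw⟩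
  · exact sub_refl
  have key : ∀ u : W, Hi α u → Hi α (Wneg u) ∧ (Wneg u).1 ≠ TVPre.F α ∧
      (Wneg u).1 ≠ TVPre.T α := by
    intro u hu
    have hsucc : ∀ b : Ordinal, b ≤ b + 1 := fun b => by
      rw [Ordinal.add_one_eq_succ]; exact (Order.lt_succ b).le
    rcases W.cases3 u with ⟨a, ha, rfl⟩ | rfl | ⟨a, ha, rfl⟩
    · have hu' : α ≤ a := hu
      have hne : α ≠ a + 1 := ne_of_lt (by
        rw [Ordinal.add_one_eq_succ]; exact Order.lt_succ_of_le hu')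
      have hrw : Wneg (WF a ha) = WT (a + 1) (succ_lt_omega1 ha) := rfl
      rw [hrw]
      exact ⟨by simpa using hu'.trans (hsucc a), by simp,
        by simp only [fst_WT, ne_eq, TVPre.T.injEq]; exact fun hh => hne hh.symm⟩
    · exact ⟨trivial, by simp [Wneg, WZ], by simp [Wneg, WZ]⟩
    · have hu' : α ≤ a := hu
      have hne : α ≠ a + 1 := ne_of_lt (by
        rw [Ordinal.add_one_eq_succ]; exact Order.lt_succ_of_le hu')
      have hrw : Wneg (WT a ha) = WF (a + 1) (succ_lt_omega1 ha) := rfl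
      rw [hrw]
      exact ⟨by simpa using hu'.trans (hsucc a),
        by simp only [fst_WF, ne_eq, TVPre.F.injEq]; exact fun hh => hne hh.symm, by simp⟩
  obtain ⟨hnv, hnvF, hnvT⟩ := key v hv
  obtain ⟨hnw, hnwF, hnwT⟩ := key w hw
  exact ⟨Or.inr ⟨hnv, hnw⟩, fun hh => absurd hh hnwF, fun hh => absurd hh hnvT⟩

end Ops
section SupInf

lemma bddAbove_FIdx (S : Set W) : BddAbove (FIdx S) :=
  ⟨omega1, fun _ hx => (mem_lt_omega1_of_FIdx hx).le⟩
lemma bddAbove_TIdx (S : Set W) : BddAbove (TIdx S) :=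
  ⟨omega1, fun _ hx => (mem_lt_omega1_of_TIdx hx).le⟩

lemma Wsup_fst_T {S : Set W} (h : (TIdx S).Nonempty) :
    (Wsup S).1 = TVPre.T (sInf (TIdx S)) := by
  unfold Wsup; rw [dif_pos h]; rfl
lemma Wsup_fst_Z1 {S : Set W} (h : ¬ (TIdx S).Nonempty) (h2 : WZ ∈ S) :
    (Wsup S).1 = TVPre.zero := by
  unfold Wsup; rw [dif_neg h, if_pos h2]; rfl
lemma Wsup_fst_F {S : Set W} (h : ¬ (TIdx S).Nonempty) (h2 : WZ ∉ S)
    (h3 : sSup (FIdx S) < omega1) : (Wsup S).1 = TVPre.F (sSup (FIdx S)) := by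
  unfold Wsup; rw [dif_neg h, if_neg h2, dif_pos h3]; rfl
lemma Wsup_fst_Z2 {S : Set W} (h : ¬ (TIdx S).Nonempty) (h2 : WZ ∉ S)
    (h3 : ¬ sSup (FIdx S) < omega1) : (Wsup S).1 = TVPre.zero := by
  unfold Wsup; rw [dif_neg h, if_neg h2, dif_neg h3]; rfl

lemma mem_TIdx {S : Set W} {a} : a ∈ TIdx S ↔ ∃ w ∈ S, w.1 = TVPre.T a := Iff.rfl
lemma mem_FIdx {S : Set W} {a} : a ∈ FIdx S ↔ ∃ w ∈ S, w.1 = TVPre.F a := Iff.rfl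

lemma sub_Hi {α} {v w : W} (h : sub α v w) (hv : Hi α v) : Hi α w := by
  rcases h.1 with rfl | ⟨_, hw⟩ <;> assumption
lemma sub_Hi' {α} {v w : W} (h : sub α v w) (hw : Hi α w) : Hi α v := by
  rcases h.1 with rfl | ⟨hv, _⟩ <;> assumption

section SubSup

variable {α : Ordinal} {S T : Set W}
  (hST : ∀ v ∈ S, ∃ w ∈ T, sub α v w) (hTS : ∀ w ∈ T, ∃ v ∈ S, sub α v w)

include hST hTS

lemma TIdx_bicond : ∀ β < α, (β ∈ TIdx S ↔ β ∈ TIdx T) := by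
  intro β hβ
  constructor
  · rintro ⟨v, hv, hv1⟩
    obtain ⟨w, hw, hsub⟩ := hST v hv
    exact ⟨w, hw, ((sub_classes_lt hsub hβ).2).1 hv1⟩
  · rintro ⟨w, hw, hw1⟩
    obtain ⟨v, hv, hsub⟩ := hTS w hw
    exact ⟨v, hv, ((sub_classes_lt hsub hβ).2).2 hw1⟩

lemma FIdx_bicond : ∀ β < α, (β ∈ FIdx S ↔ β ∈ FIdx T) := by
  intro β hβ
  constructor
  · rintro ⟨v, hv, hv1⟩
    obtain ⟨w, hw, hsub⟩ := hST v hv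
    exact ⟨w, hw, ((sub_classes_lt hsub hβ).1).1 hv1⟩
  · rintro ⟨w, hw, hw1⟩
    obtain ⟨v, hv, hsub⟩ := hTS w hw
    exact ⟨v, hv, ((sub_classes_lt hsub hβ).1).2 hw1⟩

lemma TIdx_alpha : α ∈ TIdx S → α ∈ TIdx T := by
  rintro ⟨v, hv, hv1⟩
  obtain ⟨w, hw, hsub⟩ := hST v hv
  exact ⟨w, hw, hsub.2.2 hv1⟩

lemma FIdx_alpha : α ∈ FIdx T → α ∈ FIdx S := by
  rintro ⟨w, hw, hw1⟩
  obtain ⟨v, hv, hsub⟩ := hTS w hw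
  exact ⟨v, hv, hsub.2.1 hw1⟩

/-- In the situation where `S` has no `T`-values, no `WZ`, and all its `F`-indices are `< α`,
every element of `T` is an `F`-value with index < α . -/
lemma T_struct_of_S_smallF (hTe : ¬ (TIdx S).Nonempty) (hZ : WZ ∉ S)
    (hFb : ∀ c ∈ FIdx S, c < α) :
    ∀ w ∈ T, ∃ b < α, w.1 = TVPre.F b := by
  intro w hw
  obtain ⟨v, hv, hsub⟩ := hTS w hw
  rcases W.cases3 v with ⟨c, hc, rfl⟩ | rfl | ⟨c, hc, rfl⟩
  · have hcF : c ∈ FIdx S := ⟨_, hv, rfl⟩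
    have hcα : c < α := hFb c hcF
    exact ⟨c, hcα, ((sub_classes_lt hsub hcα).1).1 rfl⟩
  · exact absurd hv hZ
  · exact absurd ⟨_, hv, rfl⟩ (fun hh => hTe ⟨c, hh⟩)

end SubSup

lemma sub_Wsup {α} {S T : Set W}
    (hST : ∀ v ∈ S, ∃ w ∈ T, sub α v w) (hTS : ∀ w ∈ T, ∃ v ∈ S, sub α v w) :
    sub α (Wsup S) (Wsup T) := by
  have t1 := TIdx_bicond hST hTS
  have f1 := FIdx_bicond hST hTS
  -- Structural fact: if T has no T-values, no WZ, and F-indices of T are ≤ some bound < α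
  -- then S similarly.
  -- (A) if Wsup S is not Hi, they are equal
  have keyA : ¬ Hi α (Wsup S) → Wsup S = Wsup T := by
    intro hlo
    by_cases hTne : (TIdx S).Nonempty
    · have hfst := Wsup_fst_T hTne
      have hiS : sInf (TIdx S) < α := by
        rw [eq_WT_of_fst hfst] at hlo; simpa [not_le] using hlo
      have hmem : sInf (TIdx S) ∈ TIdx T := (t1 _ hiS).1 (csInf_mem hTne)
      have hTne' : (TIdx T).Nonempty := ⟨_, hmem⟩
      have hfst' := Wsup_fst_T hTne'
      have hle : sInf (TIdx T) ≤ sInf (TIdx S) := csInf_le' hmem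
      have heq : sInf (TIdx T) = sInf (TIdx S) := by
        rcases lt_or_eq_of_le hle with hlt | heq
        · exact absurd (csInf_le' ((t1 _ (hlt.trans hiS)).2 (csInf_mem hTne')))
            (not_le.2 hlt)
        · exact heq
      exact W.ext (by rw [hfst, hfst', heq])
    · by_cases hZ : WZ ∈ S
      · exact absurd (by rw [eq_WZ_of_fst (Wsup_fst_Z1 hTne hZ)]; exact Hi_WZ) hlo
      · by_cases hov : sSup (FIdx S) < omega1
        · have hfst := Wsup_fst_F hTne hZ hov
          have ha : sSup (FIdx S) < α := by
            rw [eq_WF_of_fst hfst] at hlo; simpa [not_le] using hlo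
          have hFb : ∀ c ∈ FIdx S, c < α := fun c hc =>
            lt_of_le_of_lt (le_csSup (bddAbove_FIdx S) hc) ha
          have hstr := T_struct_of_S_smallF hST hTS hTne hZ hFb
          have hTe' : ¬ (TIdx T).Nonempty := by
            rintro ⟨b, w, hw, hw1⟩
            obtain ⟨c, _, hc1⟩ := hstr w hw
            rw [hw1] at hc1; exact absurd hc1 (by simp)
          have hZ' : WZ ∉ T := by
            intro hw
            obtain ⟨c, _, hc1⟩ := hstr WZ hw
            exact absurd hc1 (by simp)
          have hFeq : FIdx T = FIdx S := by
            ext b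
            constructor
            · rintro ⟨w, hw, hw1⟩
              obtain ⟨c, hcα, hc1⟩ := hstr w hw
              rw [hw1] at hc1
              injection hc1 with hbc
              exact (f1 b (hbc ▸ hcα)).2 ⟨w, hw, hw1⟩
            · intro hb
              exact (f1 b (hFb b hb)).1 hb
          have hov' : sSup (FIdx T) < omega1 := by rw [hFeq]; exact hov
          exact W.ext (by rw [hfst, Wsup_fst_F hTe' hZ' hov', hFeq])
        · exact absurd (by rw [eq_WZ_of_fst (Wsup_fst_Z2 hTne hZ hov)]; exact Hi_WZ) hlo
  -- (A') dual
  have keyA' : ¬ Hi α (Wsup T) → Wsup S = Wsup T := by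
    intro hlo
    by_cases hTne : (TIdx T).Nonempty
    · have hfst := Wsup_fst_T hTne
      have hiT : sInf (TIdx T) < α := by
        rw [eq_WT_of_fst hfst] at hlo; simpa [not_le] using hlo
      have hmem : sInf (TIdx T) ∈ TIdx S := (t1 _ hiT).2 (csInf_mem hTne)
      have hSne : (TIdx S).Nonempty := ⟨_, hmem⟩
      have hle : sInf (TIdx S) ≤ sInf (TIdx T) := csInf_le' hmem
      have heq : sInf (TIdx S) = sInf (TIdx T) := by
        rcases lt_or_eq_of_le hle with hlt | heq
        · exact absurd (csInf_le' ((t1 _ (hlt.trans hiT)).1 (csInf_mem hSne)))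
            (not_le.2 hlt)
        · exact heq
      exact W.ext (by rw [Wsup_fst_T hSne, hfst, heq])
    · by_cases hZ : WZ ∈ T
      · exact absurd (by rw [eq_WZ_of_fst (Wsup_fst_Z1 hTne hZ)]; exact Hi_WZ) hlo
      · by_cases hov : sSup (FIdx T) < omega1
        · have hfst := Wsup_fst_F hTne hZ hov
          have ha : sSup (FIdx T) < α := by
            rw [eq_WF_of_fst hfst] at hlo; simpa [not_le] using hlo
          have hFb : ∀ c ∈ FIdx T, c < α := fun c hc =>
            lt_of_le_of_lt (le_csSup (bddAbove_FIdx T) hc) ha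
          have hstr : ∀ v ∈ S, ∃ b < α, v.1 = TVPre.F b := by
            intro v hv
            obtain ⟨w, hw, hsub⟩ := hST v hv
            rcases W.cases3 w with ⟨c, hc, rfl⟩ | rfl | ⟨c, hc, rfl⟩
            · have hcα : c < α := hFb c ⟨_, hw, rfl⟩
              exact ⟨c, hcα, ((sub_classes_lt hsub hcα).1).2 rfl⟩
            · exact absurd hw hZ
            · exact absurd ⟨_, hw, rfl⟩ (fun hh => hTne ⟨c, hh⟩)
          have hTe' : ¬ (TIdx S).Nonempty := by
            rintro ⟨b, v, hv, hv1⟩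
            obtain ⟨c, _, hc1⟩ := hstr v hv
            rw [hv1] at hc1; exact absurd hc1 (by simp)
          have hZ' : WZ ∉ S := by
            intro hv
            obtain ⟨c, _, hc1⟩ := hstr WZ hv
            exact absurd hc1 (by simp)
          have hFeq : FIdx S = FIdx T := by
            ext b
            constructor
            · rintro ⟨v, hv, hv1⟩
              obtain ⟨c, hcα, hc1⟩ := hstr v hv
              rw [hv1] at hc1
              injection hc1 with hbc
              exact (f1 b (hbc ▸ hcα)).1 ⟨v, hv, hv1⟩
            · intro hb
              exact (f1 b (hFb b hb)).2 hb
          have hov' : sSup (FIdx S) < omega1 := by rw [hFeq]; exact hov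
          exact W.ext (by rw [Wsup_fst_F hTe' hZ' hov', hfst, hFeq])
        · exact absurd (by rw [eq_WZ_of_fst (Wsup_fst_Z2 hTne hZ hov)]; exact Hi_WZ) hlo
  refine ⟨?_, ?_, ?_⟩
  · by_cases hv : Hi α (Wsup S)
    · by_cases hw : Hi α (Wsup T)
      · exact Or.inr ⟨hv, hw⟩
      · exact Or.inl (keyA' hw)
    · exact Or.inl (keyA hv)
  · -- (B)
    intro hF
    -- identify the branch of `Wsup T`
    by_cases hTne : (TIdx T).Nonempty
    · rw [Wsup_fst_T hTne] at hF; exact absurd hF (by simp)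
    by_cases hZ : WZ ∈ T
    · rw [Wsup_fst_Z1 hTne hZ] at hF; exact absurd hF (by simp)
    by_cases hov : sSup (FIdx T) < omega1
    swap
    · rw [Wsup_fst_Z2 hTne hZ hov] at hF; exact absurd hF (by simp)
    rw [Wsup_fst_F hTne hZ hov] at hF
    injection hF with hb
    -- hb : sSup (FIdx T) = α
    have hFb : ∀ c ∈ FIdx T, c ≤ α := fun c hc =>
      hb ▸ le_csSup (bddAbove_FIdx T) hc
    -- every w ∈ T is WZ-free, T-free; if Hi then w = F α or F with idx ≤ α
    have hwFα : ∀ w ∈ T, Hi α w → w.1 = TVPre.F α := by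
      intro w hw hHi
      rcases W.cases3 w with ⟨c, hc, rfl⟩ | rfl | ⟨c, hc, rfl⟩
      · have h1 : c ≤ α := hFb c ⟨_, hw, rfl⟩
        have h2 : α ≤ c := hHi
        simp only [fst_WF, TVPre.F.injEq]
        exact le_antisymm h1 h2
      · exact absurd hw hZ
      · exact absurd ⟨_, hw, rfl⟩ (fun hh => hTne ⟨c, hh⟩)
    have hTeS : ¬ (TIdx S).Nonempty := by
      rintro ⟨b, v, hv, hv1⟩
      obtain ⟨w, hw, hsub⟩ := hST v hv
      by_cases hbα : b < α
      · have : w.1 = TVPre.T b := ((sub_classes_lt hsub hbα).2).1 hv1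
        exact hTne ⟨b, w, hw, this⟩
      · have hHiv : Hi α v := by
          rw [eq_WT_of_fst hv1]; simpa using not_lt.1 hbα
        have := hwFα w hw (sub_Hi hsub hHiv)
        have hvF : v.1 = TVPre.F α := hsub.2.1 this
        rw [hv1] at hvF; exact absurd hvF (by simp)
    have hZS : WZ ∉ S := by
      intro hv
      obtain ⟨w, hw, hsub⟩ := hST WZ hv
      have := hwFα w hw (sub_Hi hsub Hi_WZ)
      have hvF : (WZ : W).1 = TVPre.F α := hsub.2.1 this
      exact absurd hvF (by simp)
    have hFbS : ∀ c ∈ FIdx S, c ≤ α := by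
      rintro c ⟨v, hv, hv1⟩
      by_cases hcα : c < α
      · exact hcα.le
      · obtain ⟨w, hw, hsub⟩ := hST v hv
        have hHiv : Hi α v := by
          rw [eq_WF_of_fst hv1]; simpa using not_lt.1 hcα
        have := hwFα w hw (sub_Hi hsub hHiv)
        have hvF : v.1 = TVPre.F α := hsub.2.1 this
        rw [hv1] at hvF
        injection hvF with hh
        exact le_of_eq hh
    have hge : α ≤ sSup (FIdx S) := by
      by_cases hmem : α ∈ FIdx T
      · exact le_csSup (bddAbove_FIdx S) (FIdx_alpha hST hTS hmem)
      · rcases Set.eq_empty_or_nonempty (FIdx T) with hemp | hne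
        · rw [hemp, csSup_empty] at hb
          rw [← hb]; exact bot_le
        · rw [← hb]
          refine csSup_le hne (fun c hc => ?_)
          have hcα : c < α := lt_of_le_of_ne (hFb c hc) (fun hh => hmem (hh ▸ hc))
          exact le_csSup (bddAbove_FIdx S) ((f1 c hcα).2 hc)
    have hle : sSup (FIdx S) ≤ α := by
      rcases Set.eq_empty_or_nonempty (FIdx S) with hemp | hne
      · rw [hemp, csSup_empty]; exact bot_le
      · exact csSup_le hne hFbS
    have heq : sSup (FIdx S) = α := le_antisymm hle hge
    have hovS : sSup (FIdx S) < omega1 := by rw [heq, ← hb]; exact hov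
    rw [Wsup_fst_F hTeS hZS hovS, heq]
  · -- (C)
    intro hT
    by_cases hSne : (TIdx S).Nonempty
    swap
    · by_cases hZ : WZ ∈ S
      · rw [Wsup_fst_Z1 hSne hZ] at hT; exact absurd hT (by simp)
      · by_cases hov : sSup (FIdx S) < omega1
        · rw [Wsup_fst_F hSne hZ hov] at hT; exact absurd hT (by simp)
        · rw [Wsup_fst_Z2 hSne hZ hov] at hT; exact absurd hT (by simp)
    rw [Wsup_fst_T hSne] at hT
    injection hT with hi
    -- hi : sInf (TIdx S) = α
    have hmem : α ∈ TIdx T := TIdx_alpha hST hTS (hi ▸ csInf_mem hSne)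
    have hTne : (TIdx T).Nonempty := ⟨_, hmem⟩
    have hle : sInf (TIdx T) ≤ α := csInf_le' hmem
    have heq : sInf (TIdx T) = α := by
      rcases lt_or_eq_of_le hle with hlt | heq
      · have := csInf_le' ((t1 _ hlt).2 (csInf_mem hTne))
        rw [hi] at this
        exact absurd this (not_le.2 hlt)
      · exact heq
    rw [Wsup_fst_T hTne, heq]

end SupInf
section EvalMono

lemma TIdx_dual_image (S : Set W) : TIdx (Wdual '' S) = FIdx S := by
  ext a
  constructor
  · rintro ⟨w, ⟨v, hv, rfl⟩, hw1⟩
    exact ⟨v, hv, Wdual_fst_T.1 hw1⟩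
  · rintro ⟨v, hv, hv1⟩
    exact ⟨Wdual v, ⟨v, hv, rfl⟩, Wdual_fst_T.2 hv1⟩

lemma FIdx_dual_image (S : Set W) : FIdx (Wdual '' S) = TIdx S := by
  ext a
  constructor
  · rintro ⟨w, ⟨v, hv, rfl⟩, hw1⟩
    exact ⟨v, hv, Wdual_fst_F.1 hw1⟩
  · rintro ⟨v, hv, hv1⟩
    exact ⟨Wdual v, ⟨v, hv, rfl⟩, Wdual_fst_F.2 hv1⟩

lemma WZ_mem_dual_image {S : Set W} : WZ ∈ Wdual '' S ↔ WZ ∈ S := by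
  constructor
  · rintro ⟨v, hv, hv1⟩
    have : v = WZ := by
      have := congrArg Wdual hv1
      simpa using this
    rwa [this] at hv
  · intro h; exact ⟨WZ, h, rfl⟩

lemma Winf_fst_F {S : Set W} (h : (FIdx S).Nonempty) :
    (Winf S).1 = TVPre.F (sInf (FIdx S)) := by
  unfold Winf; rw [dif_pos h]; rfl
lemma Winf_fst_Z1 {S : Set W} (h : ¬ (FIdx S).Nonempty) (h2 : WZ ∈ S) :
    (Winf S).1 = TVPre.zero := by
  unfold Winf; rw [dif_neg h, if_pos h2]; rfl
lemma Winf_fst_T {S : Set W} (h : ¬ (FIdx S).Nonempty) (h2 : WZ ∉ S)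
    (h3 : sSup (TIdx S) < omega1) : (Winf S).1 = TVPre.T (sSup (TIdx S)) := by
  unfold Winf; rw [dif_neg h, if_neg h2, dif_pos h3]; rfl
lemma Winf_fst_Z2 {S : Set W} (h : ¬ (FIdx S).Nonempty) (h2 : WZ ∉ S)
    (h3 : ¬ sSup (TIdx S) < omega1) : (Winf S).1 = TVPre.zero := by
  unfold Winf; rw [dif_neg h, if_neg h2, dif_neg h3]; rfl

lemma Winf_eq_dual (S : Set W) : Winf S = Wdual (Wsup (Wdual '' S)) := by
  apply W.ext
  by_cases h1 : (FIdx S).Nonempty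
  · have h1' : (TIdx (Wdual '' S)).Nonempty := by rw [TIdx_dual_image]; exact h1
    rw [Winf_fst_F h1, eq_WT_of_fst (Wsup_fst_T h1')]
    simp [TIdx_dual_image]
  · have h1' : ¬ (TIdx (Wdual '' S)).Nonempty := by rw [TIdx_dual_image]; exact h1
    by_cases h2 : WZ ∈ S
    · rw [Winf_fst_Z1 h1 h2, eq_WZ_of_fst (Wsup_fst_Z1 h1' (WZ_mem_dual_image.2 h2))]
      rfl
    · have h2' : WZ ∉ Wdual '' S := fun hh => h2 (WZ_mem_dual_image.1 hh)
      by_cases h3 : sSup (TIdx S) < omega1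
      · have h3' : sSup (FIdx (Wdual '' S)) < omega1 := by
          rw [FIdx_dual_image]; exact h3
        rw [Winf_fst_T h1 h2 h3, eq_WF_of_fst (Wsup_fst_F h1' h2' h3')]
        simp [FIdx_dual_image]
      · have h3' : ¬ sSup (FIdx (Wdual '' S)) < omega1 := by
          rw [FIdx_dual_image]; exact h3
        rw [Winf_fst_Z2 h1 h2 h3, eq_WZ_of_fst (Wsup_fst_Z2 h1' h2' h3')]
        rfl

lemma sub_Winf {α} {S T : Set W}
    (hST : ∀ v ∈ S, ∃ w ∈ T, sub α v w) (hTS : ∀ w ∈ T, ∃ v ∈ S, sub α v w) :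
    sub α (Winf S) (Winf T) := by
  rw [Winf_eq_dual S, Winf_eq_dual T]
  rw [sub_dual]
  apply sub_Wsup
  · rintro x ⟨w, hw, rfl⟩
    obtain ⟨v, hv, hsub⟩ := hTS w hw
    exact ⟨Wdual v, ⟨v, hv, rfl⟩, sub_dual.2 hsub⟩
  · rintro y ⟨v, hv, rfl⟩
    obtain ⟨w, hw, hsub⟩ := hST v hv
    exact ⟨Wdual w, ⟨w, hw, rfl⟩, sub_dual.2 hsub⟩

lemma eval_sub {L : Language} {α} {I J : Interp L} (h : ∀ A, sub α (I A) (J A)) :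
    ∀ (φ : Formula L) (g : ℕ → HU L), sub α (φ.eval I g) (φ.eval J g) := by
  intro φ
  induction φ with
  | verum => intro g; exact sub_refl
  | falsum => intro g; exact sub_refl
  | atom p ts => intro g; exact h _
  | neg φ ih => intro g; exact sub_neg (ih g)
  | conj φ ψ ih ih' => intro g; exact sub_min (ih g) (ih' g)
  | disj φ ψ ih ih' => intro g; exact sub_max (ih g) (ih' g)
  | all v φ ih =>
    intro g
    apply sub_Winf
    · rintro x ⟨u, rfl⟩
      exact ⟨_, ⟨u, rfl⟩, ih _⟩
    · rintro y ⟨u, rfl⟩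
      exact ⟨_, ⟨u, rfl⟩, ih _⟩
  | ex v φ ih =>
    intro g
    apply sub_Wsup
    · rintro x ⟨u, rfl⟩
      exact ⟨_, ⟨u, rfl⟩, ih _⟩
    · rintro y ⟨u, rfl⟩
      exact ⟨_, ⟨u, rfl⟩, ih _⟩

lemma TP_sub {L : Language} (P : Program L) {α} {I J : Interp L}
    (h : ∀ A, sub α (I A) (J A)) : ∀ A, sub α (TP P I A) (TP P J A) := by
  intro A
  unfold TP
  apply sub_Wsup
  · rintro v ⟨φ, hφ, rfl⟩
    exact ⟨_, ⟨φ, hφ, rfl⟩, eval_sub h φ _⟩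
  · rintro w ⟨φ, hφ, rfl⟩
    exact ⟨_, ⟨φ, hφ, rfl⟩, eval_sub h φ _⟩

lemma TP_mat {L : Language} (P : Program L) {α} {I J : Interp L}
    (h : ∀ A, mat α (I A) (J A)) : ∀ A, mat α (TP P I A) (TP P J A) := fun A =>
  ⟨TP_sub P (fun B => (h B).1) A, TP_sub P (fun B => (h B).2) A⟩

lemma sqa_TP {L : Language} (P : Program L) {α} {I J : Interp L} (h : sqa α I J) :
    sqa α (TP P I) (TP P J) := sqa_iff.2 (TP_sub P (sqa_iff.1 h))

lemma eqa_TP {L : Language} (P : Program L) {α} {I J : Interp L} (h : eqa α I J) :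
    eqa α (TP P I) (TP P J) := eqa_iff.2 (TP_mat P (eqa_iff.1 h))

end EvalMono
section Iter

lemma degLT_iff_not_Hi {w : W} {α} : degLT w α ↔ ¬ Hi α w := by
  rcases W.cases3 w with ⟨a, ha, rfl⟩ | rfl | ⟨a, ha, rfl⟩ <;>
    simp [degLT, WF, WZ, WT, Hi, not_le]

lemma sub_low_eq {α} {v w : W} (h : sub α v w) (hv : ¬ Hi α v) : v = w := by
  rcases h.1 with rfl | ⟨h1, _⟩
  · rfl
  · exact absurd h1 hv

variable {L : Language}

lemma iter_zero (P : Program L) {α} (hα : α < omega1) (I : Interp L) :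
    iter P α hα I 0 = I := Ordinal.limitRecOn_zero _ _ _

lemma iter_succ (P : Program L) {α} (hα : α < omega1) (I : Interp L) (β : Ordinal) :
    iter P α hα I (β + 1) = TP P (iter P α hα I β) := by
  unfold iter
  exact Ordinal.limitRecOn_add_one _ _ _ _

lemma iter_limit (P : Program L) {α} (hα : α < omega1) (I : Interp L) {β : Ordinal}
    (hβ : Order.IsSuccLimit β) (A : GroundAtom L) :
    iter P α hα I β A =
      if degLT (I A) α then I A
      else if ∃ γ, ∃ _ : γ < β, (iter P α hα I γ A).1 = TVPre.T α then WT α hα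
      else if ∀ γ, ∀ _ : γ < β, (iter P α hα I γ A).1 = TVPre.F α then WF α hα
      else WF (α + 1) (succ_lt_omega1 hα) := by
  unfold iter
  exact congrFun (Ordinal.limitRecOn_limit (motive := fun _ => Interp L) _ _ _ _ hβ) A

variable {P : Program L} {α : Ordinal} {hα : α < omega1} {I : Interp L}

theorem iter_chain (hI : ∀ A, sub α (I A) (TP P I A)) :
    ∀ β : Ordinal, (∀ γ, γ < β → ∀ A, sub α (iter P α hα I γ A) (iter P α hα I β A)) ∧
      (∀ A, sub α (iter P α hα I β A) (TP P (iter P α hα I β) A)) := by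
  intro β
  induction β using Ordinal.induction with
  | _ β ih =>
  rcases Ordinal.zero_or_succ_or_isSuccLimit β with rfl | ⟨γ₀, rfl⟩ | hlim
  · refine ⟨fun γ hγ => absurd hγ (not_lt_of_ge (show (0:Ordinal) ≤ γ from zero_le)), fun A => ?_⟩
    rw [iter_zero]
    exact hI A
  · have hs : Order.succ γ₀ = γ₀ + 1 := (Ordinal.add_one_eq_succ γ₀).symm
    have hγ₀ : γ₀ < Order.succ γ₀ := Order.lt_succ γ₀
    have IH := ih γ₀ hγ₀
    have step : ∀ A, sub α (iter P α hα I γ₀ A) (iter P α hα I (Order.succ γ₀) A) := by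
      intro A
      rw [hs, iter_succ]
      exact IH.2 A
    constructor
    · intro γ hγ A
      rcases lt_or_eq_of_le (Order.lt_succ_iff.1 hγ) with hlt | rfl
      · exact sub_trans (IH.1 γ hlt A) (step A)
      · exact step A
    · intro A
      rw [hs, iter_succ]
      have : ∀ B, sub α (iter P α hα I γ₀ B) (TP P (iter P α hα I γ₀) B) := IH.2
      have h2 := TP_sub P this
      rw [← iter_succ P hα I γ₀, ← hs] at h2
      rw [hs, iter_succ] at h2
      exact h2 A
  · -- limit case
    have hIsub : ∀ γ, γ < β → ∀ A, sub α (I A) (iter P α hα I γ A) := by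
      intro γ hγ A
      rcases eq_or_lt_of_le (show (0:Ordinal) ≤ γ from zero_le) with heq | hpos
      · rw [← heq, iter_zero]
        exact sub_refl
      · have := (ih γ hγ).1 0 hpos A
        rwa [iter_zero] at this
    have chainlt : ∀ γ, γ < β → ∀ A, sub α (iter P α hα I γ A) (iter P α hα I β A) := by
      intro γ hγ A
      by_cases hdeg : degLT (I A) α
      · have hval : iter P α hα I β A = I A := by
          rw [iter_limit P hα I hlim A, if_pos hdeg]
        have hγA : iter P α hα I γ A = I A :=
          (sub_low_eq (hIsub γ hγ A) (degLT_iff_not_Hi.1 hdeg)).symm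
        rw [hval, hγA]
        exact sub_refl
      · have hHiI : Hi α (I A) := not_not.1 (fun hh => hdeg (degLT_iff_not_Hi.2 hh))
        have hHiγ : Hi α (iter P α hα I γ A) := sub_Hi (hIsub γ hγ A) hHiI
        by_cases hT : ∃ γ', ∃ _ : γ' < β, (iter P α hα I γ' A).1 = TVPre.T α
        · have hval : iter P α hα I β A = WT α hα := by
            rw [iter_limit P hα I hlim A, if_neg hdeg, if_pos hT]
          rw [hval]
          exact ⟨Or.inr ⟨hHiγ, by simp⟩, fun hh => absurd hh (by simp), fun _ => rfl⟩
        · by_cases hF : ∀ γ', ∀ _ : γ' < β, (iter P α hα I γ' A).1 = TVPre.F α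
          · have hval : iter P α hα I β A = WF α hα := by
              rw [iter_limit P hα I hlim A, if_neg hdeg, if_neg hT, if_pos hF]
            have hγval : iter P α hα I γ A = WF α hα := W.ext (hF γ hγ)
            rw [hval, hγval]
            exact sub_refl
          · have hval : iter P α hα I β A = WF (α + 1) (succ_lt_omega1 hα) := by
              rw [iter_limit P hα I hlim A, if_neg hdeg, if_neg hT, if_neg hF]
            have hαsucc : α ≤ α + 1 := by
              rw [Ordinal.add_one_eq_succ]; exact (Order.lt_succ α).le
            have hne : α + 1 ≠ α := ne_of_gt (by
              rw [Ordinal.add_one_eq_succ]; exact Order.lt_succ α)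
            rw [hval]
            refine ⟨Or.inr ⟨hHiγ, by simpa using hαsucc⟩, fun hh => ?_, fun hh => ?_⟩
            · injection hh with hh
              exact absurd hh hne
            · exact absurd ⟨γ, hγ, hh⟩ hT
    refine ⟨chainlt, ?_⟩
    have TPstep : ∀ γ, γ < β → ∀ A,
        sub α (iter P α hα I (γ + 1) A) (TP P (iter P α hα I β) A) := by
      intro γ hγ A
      have h2 := TP_sub P (fun B => chainlt γ hγ B)
      rw [iter_succ]
      exact h2 A
    have stepdown : ∀ γ, γ < β → ∀ A,
        sub α (iter P α hα I γ A) (iter P α hα I (γ + 1) A) := by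
      intro γ hγ A
      rw [iter_succ]
      exact (ih γ hγ).2 A
    intro A
    refine ⟨?_, ?_, ?_⟩
    · by_cases hdeg : degLT (I A) α
      · have hnHi := degLT_iff_not_Hi.1 hdeg
        left
        have hβA : iter P α hα I β A = I A := by
          rw [iter_limit P hα I hlim A, if_pos hdeg]
        have hsub0 : sub α (I A) (iter P α hα I (0 + 1) A) := by
          have := stepdown 0 hlim.pos A
          rwa [iter_zero] at this
        have h1A : iter P α hα I (0 + 1) A = I A := (sub_low_eq hsub0 hnHi).symm
        have h2 : sub α (iter P α hα I (0 + 1) A) (TP P (iter P α hα I β) A) :=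
          TPstep 0 hlim.pos A
        rw [h1A] at h2
        have h3 := sub_low_eq h2 hnHi
        rw [hβA, ← h3]
      · have hHiI : Hi α (I A) := not_not.1 (fun hh => hdeg (degLT_iff_not_Hi.2 hh))
        right
        constructor
        · rw [iter_limit P hα I hlim A, if_neg hdeg]
          split_ifs with h1 h2
          · simp
          · simp
          · simp
        · have hsub0 : sub α (I A) (iter P α hα I (0 + 1) A) := by
            have := stepdown 0 hlim.pos A
            rwa [iter_zero] at this
          exact sub_Hi (TPstep 0 hlim.pos A) (sub_Hi hsub0 hHiI)
    · intro hFtp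
      have allF : ∀ γ, ∀ _ : γ < β, (iter P α hα I γ A).1 = TVPre.F α := by
        intro γ hγ
        have h1 : (iter P α hα I (γ + 1) A).1 = TVPre.F α := (TPstep γ hγ A).2.1 hFtp
        exact (stepdown γ hγ A).2.1 h1
      have hdeg : ¬ degLT (I A) α := by
        intro hdeg
        have h0 : (I A).1 = TVPre.F α := by
          have := allF 0 hlim.pos
          rwa [iter_zero] at this
        exact (degLT_iff_not_Hi.1 hdeg) (by rw [eq_WF_of_fst h0]; simp)
      have hT : ¬ ∃ γ, ∃ _ : γ < β, (iter P α hα I γ A).1 = TVPre.T α := by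
        rintro ⟨γ, hγ, hTγ⟩
        rw [allF γ hγ] at hTγ
        exact absurd hTγ (by simp)
      rw [iter_limit P hα I hlim A, if_neg hdeg, if_neg hT, if_pos allF]
      rfl
    · intro hTβ
      by_cases hdeg : degLT (I A) α
      · exfalso
        have hβA : iter P α hα I β A = I A := by
          rw [iter_limit P hα I hlim A, if_pos hdeg]
        rw [hβA] at hTβ
        exact (degLT_iff_not_Hi.1 hdeg) (by rw [eq_WT_of_fst hTβ]; simp)
      by_cases hT : ∃ γ, ∃ _ : γ < β, (iter P α hα I γ A).1 = TVPre.T α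
      · obtain ⟨γ, hγ, hTγ⟩ := hT
        have h1 : (iter P α hα I (γ + 1) A).1 = TVPre.T α := (stepdown γ hγ A).2.2 hTγ
        exact (TPstep γ hγ A).2.2 h1
      · exfalso
        rw [iter_limit P hα I hlim A, if_neg hdeg, if_neg hT] at hTβ
        split_ifs at hTβ <;> exact absurd hTβ (by simp)

end Iter
section Countability

variable {L : Language}

/-- Numeric coding of terms. -/
def Term.code : Term L → ℕ
  | .var n => Nat.pair 0 n
  | .const c => Nat.pair 1 c.val
  | .func f ts => Nat.pair 2 (Nat.pair f.val (Encodable.encode (List.ofFn fun i => (ts i).code)))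

lemma Term.code_inj : ∀ {t₁ t₂ : Term L}, t₁.code = t₂.code → t₁ = t₂ := by
  intro t₁
  induction t₁ with
  | var n =>
    intro t₂ h
    cases t₂ <;> simp [Term.code, Nat.pair_eq_pair] at h
    rw [h]
  | const c =>
    intro t₂ h
    cases t₂ <;> simp [Term.code, Nat.pair_eq_pair] at h
    rw [Fin.ext h]
  | func f ts ih =>
    intro t₂ h
    cases t₂ with
    | var m => simp [Term.code, Nat.pair_eq_pair] at h
    | const c => simp [Term.code, Nat.pair_eq_pair] at h
    | func f' ts' =>
      simp only [Term.code, Nat.pair_eq_pair] at h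
      obtain ⟨hf, hl⟩ := h.2
      have hff : f = f' := Fin.ext hf
      subst hff
      congr 1
      have hl' := List.ofFn_inj.1 (Encodable.encode_injective hl)
      funext i
      exact ih i (congrFun hl' i)

instance : Countable (Term L) := ⟨⟨Term.code, fun _ _ h => Term.code_inj h⟩⟩

instance : Countable (HU L) := Subtype.countable

instance : Countable (GroundAtom L) := by
  have e : GroundAtom L ≃ ((p : Fin L.nPred) × (Fin (L.predAr p) → HU L)) :=
    { toFun := fun A => ⟨A.pred, A.args⟩
      invFun := fun x => ⟨x.1, x.2⟩
      left_inv := fun A => rfl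
      right_inv := fun x => rfl }
  exact Countable.of_equiv _ e.symm

end Countability
section Stab

variable {L : Language} {P : Program L} {α : Ordinal} {hα : α < omega1} {I : Interp L}

lemma iter_le (hI : ∀ A, sub α (I A) (TP P I A)) {γ β : Ordinal} (h : γ ≤ β)
    (A : GroundAtom L) : sub α (iter P α hα I γ A) (iter P α hα I β A) := by
  rcases eq_or_lt_of_le h with rfl | hlt
  · exact sub_refl
  · exact (iter_chain hI β).1 γ hlt A

lemma iter_from_I (hI : ∀ A, sub α (I A) (TP P I A)) (β : Ordinal)
    (A : GroundAtom L) : sub α (I A) (iter P α hα I β A) := by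
  have := iter_le (hα := hα) hI (show (0:Ordinal) ≤ β from zero_le) A
  rwa [iter_zero] at this

lemma sub_not_mat {v w : W} {α} (hs : sub α v w) (hm : ¬ mat α v w) :
    (v.1 = TVPre.F α ∧ w.1 ≠ TVPre.F α) ∨ (w.1 = TVPre.T α ∧ v.1 ≠ TVPre.T α) := by
  have hne : v ≠ w := fun hh => hm (hh ▸ mat_refl)
  have hHi : Hi α v ∧ Hi α w := by
    rcases hs.1 with rfl | hh
    · exact absurd rfl hne
    · exact hh
  have hnot : ¬ (Hi (α + 1) v ∧ Hi (α + 1) w) := fun hh => hm (mat_iff.2 (Or.inr hh))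
  by_cases hvT : v.1 = TVPre.T α
  · exact absurd (W.ext (hvT.trans (hs.2.2 hvT).symm)) hne
  by_cases hwF : w.1 = TVPre.F α
  · exact absurd (W.ext ((hs.2.1 hwF).trans hwF.symm)) hne
  by_cases hvF : v.1 = TVPre.F α
  · exact Or.inl ⟨hvF, hwF⟩
  by_cases hwT : w.1 = TVPre.T α
  · exact Or.inr ⟨hwT, hvT⟩
  · exact absurd ⟨Hi_succ_iff.2 ⟨hHi.1, hvF, hvT⟩, Hi_succ_iff.2 ⟨hHi.2, hwF, hwT⟩⟩ hnot

lemma exists_stab (hI : ∀ A, sub α (I A) (TP P I A)) :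
    ∃ γs, γs < omega1 ∧ ∀ A, mat α (iter P α hα I γs A) (iter P α hα I (γs + 1) A) := by
  by_contra hno
  push_neg at hno
  choose Af hAf using hno
  have hsubstep : ∀ γ : Ordinal, ∀ A, sub α (iter P α hα I γ A) (iter P α hα I (γ + 1) A) := by
    intro γ A
    rw [iter_succ]
    exact (iter_chain hI γ).2 A
  classical
  set f : {γ : Ordinal // γ < omega1} → GroundAtom L × Bool := fun x =>
    (Af x.1 x.2, if (iter P α hα I x.1 (Af x.1 x.2)).1 = TVPre.F α then true else false)
    with hf
  have key : ∀ x y : {γ : Ordinal // γ < omega1}, x.1 < y.1 → f x ≠ f y := by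
    intro x y hlt heq
    rw [hf] at heq
    simp only [Prod.mk.injEq] at heq
    obtain ⟨hA, hb⟩ := heq
    set A := Af x.1 x.2 with hAdef
    have hcase_x := sub_not_mat (hsubstep x.1 A) (hAf x.1 x.2)
    have hcase_y := sub_not_mat (hsubstep y.1 (Af y.1 y.2)) (hAf y.1 y.2)
    rw [← hA] at hcase_y
    have hsucc_le : x.1 + 1 ≤ y.1 := by
      rw [Ordinal.add_one_eq_succ]; exact Order.succ_le_of_lt hlt
    have hchain := iter_le (hα := hα) hI hsucc_le A
    by_cases hxF : (iter P α hα I x.1 A).1 = TVPre.F α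
    · have hyF : (iter P α hα I y.1 A).1 = TVPre.F α := by
        rw [if_pos hxF] at hb
        by_cases hyF' : (iter P α hα I y.1 (Af y.1 y.2)).1 = TVPre.F α
        · rwa [← hA] at hyF'
        · rw [if_neg hyF'] at hb
          exact absurd hb (by simp)
      have hxw : (iter P α hα I (x.1 + 1) A).1 ≠ TVPre.F α := by
        rcases hcase_x with ⟨_, h2⟩ | ⟨h1, _⟩
        · exact h2
        · rw [h1]; simp
      exact hxw (hchain.2.1 hyF)
    · rcases hcase_x with ⟨h1, _⟩ | ⟨h1, _⟩
      · exact hxF h1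
      · have hyT : (iter P α hα I y.1 A).1 = TVPre.T α := hchain.2.2 h1
        rcases hcase_y with ⟨hy1, _⟩ | ⟨_, hy2⟩
        · rw [hyT] at hy1; exact absurd hy1 (by simp)
        · exact hy2 hyT
  have hinj : Function.Injective f := by
    intro x y hxy
    rcases lt_trichotomy x.1 y.1 with h | h | h
    · exact absurd hxy (key x y h)
    · exact Subtype.ext h
    · exact absurd hxy.symm (key y x h)
  have hcnt : Countable {γ : Ordinal // γ < omega1} := hinj.countable
  have h1 : Cardinal.mk {γ : Ordinal // γ < omega1} ≤ Cardinal.aleph0 :=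
    Cardinal.mk_le_aleph0
  have h0 : Cardinal.mk (Set.Iio omega1 : Set Ordinal) =
      Cardinal.mk {γ : Ordinal // γ < omega1} := rfl
  rw [← h0, Ordinal.mk_Iio_ordinal] at h1
  have h2 : omega1.card = Cardinal.aleph 1 := Ordinal.card_omega 1
  rw [h2, ← Cardinal.lift_aleph0.{1, 0}, Cardinal.lift_le] at h1
  exact absurd h1 (not_le.2 Cardinal.aleph0_lt_aleph_one)

theorem iter_stab_prop (hI : ∀ A, sub α (I A) (TP P I A)) {γs : Ordinal}
    (hstab : ∀ A, mat α (iter P α hα I γs A) (iter P α hα I (γs + 1) A)) :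
    ∀ β : Ordinal, γs ≤ β → ∀ A, mat α (iter P α hα I γs A) (iter P α hα I β A) := by
  intro β
  induction β using Ordinal.induction with
  | _ β ih =>
  intro hβ A
  rcases eq_or_lt_of_le hβ with rfl | hlt
  · exact mat_refl
  rcases Ordinal.zero_or_succ_or_isSuccLimit β with rfl | ⟨γ₀, rfl⟩ | hlim
  · exact absurd hlt (not_lt_of_ge (show (0:Ordinal) ≤ γs from zero_le))
  · have hγ₀ : γs ≤ γ₀ := Order.lt_succ_iff.1 hlt
    have h1 : ∀ B, mat α (iter P α hα I γs B) (iter P α hα I γ₀ B) :=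
      fun B => ih γ₀ (Order.lt_succ γ₀) hγ₀ B
    have h2 := TP_mat P h1
    have hs : Order.succ γ₀ = γ₀ + 1 := (Ordinal.add_one_eq_succ γ₀).symm
    rw [hs, iter_succ]
    refine mat_trans (hstab A) ?_
    rw [iter_succ]
    exact h2 A
  · -- limit case
    by_cases hdeg : degLT (I A) α
    · have hval : iter P α hα I β A = I A := by
        rw [iter_limit P hα I hlim A, if_pos hdeg]
      have hγsA : iter P α hα I γs A = I A :=
        (sub_low_eq (iter_from_I hI γs A) (degLT_iff_not_Hi.1 hdeg)).symm
      rw [hval, hγsA]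
      exact mat_refl
    · have hHiI : Hi α (I A) := not_not.1 (fun hh => hdeg (degLT_iff_not_Hi.2 hh))
      have hHiγs : Hi α (iter P α hα I γs A) := sub_Hi (iter_from_I hI γs A) hHiI
      by_cases hT : ∃ γ, ∃ _ : γ < β, (iter P α hα I γ A).1 = TVPre.T α
      · have hval : iter P α hα I β A = WT α hα := by
          rw [iter_limit P hα I hlim A, if_neg hdeg, if_pos hT]
        obtain ⟨γ, hγ, hTγ⟩ := hT
        have hγsT : (iter P α hα I γs A).1 = TVPre.T α := by
          rcases le_total γ γs with hle | hle
          · exact (iter_le (hα := hα) hI hle A).2.2 hTγ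
          · have := (ih γ hγ hle A).2
            exact this.2.2 hTγ
        rw [hval, eq_WT_of_fst hγsT]
        exact mat_refl
      · by_cases hF : ∀ γ, ∀ _ : γ < β, (iter P α hα I γ A).1 = TVPre.F α
        · have hval : iter P α hα I β A = WF α hα := by
            rw [iter_limit P hα I hlim A, if_neg hdeg, if_neg hT, if_pos hF]
          have hγsF : (iter P α hα I γs A).1 = TVPre.F α := hF γs hlt
          rw [hval, eq_WF_of_fst hγsF]
          exact mat_refl
        · have hval : iter P α hα I β A = WF (α + 1) (succ_lt_omega1 hα) := by
            rw [iter_limit P hα I hlim A, if_neg hdeg, if_neg hT, if_neg hF]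
          have hγsnT : (iter P α hα I γs A).1 ≠ TVPre.T α := fun hh =>
            hT ⟨γs, hlt, hh⟩
          have hγsnF : (iter P α hα I γs A).1 ≠ TVPre.F α := by
            intro hh
            apply hF
            intro γ hγ
            rcases le_total γ γs with hle | hle
            · exact (iter_le (hα := hα) hI hle A).2.1 hh
            · exact ((ih γ hγ hle A).2).2.1 hh
          rw [hval]
          refine mat_iff.2 (Or.inr ⟨Hi_succ_iff.2 ⟨hHiγs, hγsnF, hγsnT⟩, ?_⟩)
          rw [Hi_succ_iff]
          refine ⟨by simpa using (Order.lt_succ α).le.trans (le_of_eq (Ordinal.add_one_eq_succ α).symm), ?_, by simp⟩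
          simp only [fst_WF, ne_eq, TVPre.F.injEq]
          exact fun hh => (ne_of_gt (by rw [Ordinal.add_one_eq_succ]; exact Order.lt_succ α)) hh
  
theorem iter_omega1_eqa (hI : ∀ A, sub α (I A) (TP P I A)) :
    ∀ A, mat α (iter P α hα I omega1 A) (TP P (iter P α hα I omega1) A) := by
  obtain ⟨γs, hγs, hstab⟩ := exists_stab (hα := hα) hI
  intro A
  have h1 : mat α (iter P α hα I γs A) (iter P α hα I omega1 A) :=
    iter_stab_prop hI hstab omega1 hγs.le A
  have h2 : mat α (iter P α hα I γs A) (iter P α hα I (omega1 + 1) A) :=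
    iter_stab_prop hI hstab (omega1 + 1) (hγs.le.trans (by
      rw [Ordinal.add_one_eq_succ]; exact (Order.lt_succ omega1).le)) A
  rw [iter_succ] at h2
  exact mat_trans (mat_symm h1) h2

end Stab
section Union

variable {L : Language} {P : Program L} {α : Ordinal} {hα : α < omega1}

lemma union_val (A : GroundAtom L) :
    (∃ ζ, ∃ _ : ζ < α, ((approx P ζ A).1 = TVPre.F ζ ∨ (approx P ζ A).1 = TVPre.T ζ) ∧
      unionInterp α hα (fun γ _ => approx P γ) A = approx P ζ A) ∨
      ((¬ ∃ ζ, ∃ _ : ζ < α,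
        (approx P ζ A).1 = TVPre.F ζ ∨ (approx P ζ A).1 = TVPre.T ζ) ∧
      unionInterp α hα (fun γ _ => approx P γ) A = WF α hα) := by
  by_cases h : ∃ ζ, ∃ _ : ζ < α,
      (approx P ζ A).1 = TVPre.F ζ ∨ (approx P ζ A).1 = TVPre.T ζ
  · left
    obtain ⟨hζ0, hcl⟩ := h.choose_spec
    exact ⟨h.choose, hζ0, hcl, by unfold unionInterp; rw [dif_pos h]⟩
  · right
    exact ⟨h, by unfold unionInterp; rw [dif_neg h]⟩

/-- `M_γ =_γ ⊔` for `γ < α`. -/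
lemma union_mat (hcoh : ∀ ζ γ, ζ < γ → γ < α → eqa ζ (approx P ζ) (approx P γ))
    {γ : Ordinal} (hγ : γ < α) (A : GroundAtom L) :
    mat γ (approx P γ A) (unionInterp α hα (fun γ _ => approx P γ) A) := by
  have transfer : ∀ β ≤ γ, ((approx P γ A).1 = TVPre.F β → (approx P β A).1 = TVPre.F β) ∧
      ((approx P γ A).1 = TVPre.T β → (approx P β A).1 = TVPre.T β) := by
    intro β hβ
    rcases eq_or_lt_of_le hβ with rfl | hlt'
    · exact ⟨id, id⟩
    · have hb := mat_eq_of_lo (eqa_iff.1 (hcoh β γ hlt' hγ) A) (le_refl β)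
      exact ⟨hb.1.2, hb.2.2⟩
  rcases union_val (hα := hα) A with ⟨ζ, hζ, hcl, hval⟩ | ⟨hno, hval⟩
  · rw [hval]
    rcases le_or_gt ζ γ with hle | hlt
    · have heq : approx P γ A = approx P ζ A := by
        rcases eq_or_lt_of_le hle with rfl | hlt'
        · rfl
        · have hb := mat_eq_of_lo (eqa_iff.1 (hcoh ζ γ hlt' hγ) A) (le_refl ζ)
          rcases hcl with hF | hT
          · exact W.ext ((hb.1.1 hF).trans hF.symm)
          · exact W.ext ((hb.2.1 hT).trans hT.symm)
      rw [heq]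
      exact mat_refl
    · exact eqa_iff.1 (hcoh γ ζ hlt hζ) A
  · rw [hval]
    apply mat_of_classes
    · intro β hβ
      constructor
      · intro hF
        exact absurd ⟨β, lt_of_le_of_lt hβ hγ, Or.inl ((transfer β hβ).1 hF)⟩ hno
      · intro hF
        simp only [fst_WF, TVPre.F.injEq] at hF
        exact absurd hF (ne_of_gt (lt_of_le_of_lt hβ hγ))
    · intro β hβ
      constructor
      · intro hT
        exact absurd ⟨β, lt_of_le_of_lt hβ hγ, Or.inr ((transfer β hβ).2 hT)⟩ hno
      · intro hT
        exact absurd hT (by simp)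

/-- The key prefixpoint property of the union. -/
lemma union_sqa (hcoh : ∀ ζ γ, ζ < γ → γ < α → eqa ζ (approx P ζ) (approx P γ))
    (hconv : ∀ γ, γ < α → eqa γ (approx P γ) (TP P (approx P γ))) (A : GroundAtom L) :
    sub α (unionInterp α hα (fun γ _ => approx P γ) A)
      (TP P (unionInterp α hα (fun γ _ => approx P γ)) A) := by
  set U := unionInterp α hα (fun γ _ => approx P γ) with hU
  have mβ : ∀ β, β < α → ∀ B, mat β (U B) (TP P U B) := by
    intro β hβ B
    have h1 : mat β (U B) (approx P β B) := mat_symm (union_mat hcoh hβ B)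
    have h2 : mat β (approx P β B) (TP P (approx P β) B) := eqa_iff.1 (hconv β hβ) B
    have h3 : ∀ C, mat β (approx P β C) (U C) := fun C => union_mat hcoh hβ C
    have h4 : mat β (TP P (approx P β) B) (TP P U B) := TP_mat P h3 B
    exact mat_trans h1 (mat_trans h2 h4)
  apply sub_of_classes
  · intro β hβ
    exact (mat_eq_of_lo (mβ β hβ A) (le_refl β)).1
  · intro β hβ
    exact (mat_eq_of_lo (mβ β hβ A) (le_refl β)).2
  · intro hFtp
    rcases union_val (P := P) (hα := hα) A with ⟨ζ, hζ, hcl, hval⟩ | ⟨_, hval⟩ <;>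
      rw [← hU] at hval
    · exfalso
      have hm := mat_eq_of_lo (mβ ζ hζ A) (le_refl ζ)
      rw [hval] at hm
      rcases hcl with hF | hT
      · have := hm.1.1 hF
        rw [hFtp] at this
        injection this with hh
        exact absurd hh (ne_of_lt hζ).symm
      · have := hm.2.1 hT
        rw [hFtp] at this
        exact absurd this (by simp)
    · rw [hval]; rfl
  · intro hTu
    exfalso
    rcases union_val (P := P) (hα := hα) A with ⟨ζ, hζ, hcl, hval⟩ | ⟨_, hval⟩ <;>
      rw [← hU] at hval
    · rw [hval] at hTu
      rcases hcl with hF | hT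
      · rw [hF] at hTu; exact absurd hTu (by simp)
      · rw [hT] at hTu
        injection hTu with hh
        exact absurd hh (ne_of_lt hζ)
    · rw [hval] at hTu
      exact absurd hTu (by simp)

end Union
section Master

variable {L : Language} {P : Program L}

theorem approx_master : ∀ α : Ordinal, α < omega1 →
    (∀ ζ, ζ < α → eqa ζ (approx P ζ) (approx P α)) ∧
      eqa α (approx P α) (TP P (approx P α)) := by
  intro α
  induction α using Ordinal.induction with
  | _ α ih =>
  intro hα
  have hcoh : ∀ ζ γ, ζ < γ → γ < α → eqa ζ (approx P ζ) (approx P γ) :=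
    fun ζ γ hl hg => (ih γ hg (hg.trans hα)).1 ζ hl
  have hconv : ∀ γ, γ < α → eqa γ (approx P γ) (TP P (approx P γ)) :=
    fun γ hg => (ih γ hg (hg.trans hα)).2
  have hI : ∀ A, sub α ((unionInterp α hα fun γ _ => approx P γ) A)
      (TP P (unionInterp α hα fun γ _ => approx P γ) A) := union_sqa hcoh hconv
  have hcond : (∀ γ, ∀ _ : γ < α, ∀ ζ, ζ < γ → eqa ζ (approx P ζ) (approx P γ)) ∧
      sqa α (unionInterp α hα fun γ _ => approx P γ)
        (TP P (unionInterp α hα fun γ _ => approx P γ)) :=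
    ⟨fun γ hγ ζ hζ => hcoh ζ γ hζ hγ, sqa_iff.2 hI⟩
  have happrox : approx P α =
      iter P α hα (unionInterp α hα fun γ _ => approx P γ) omega1 := by
    rw [approx]
    exact (dif_pos hα).trans (if_pos hcond)
  constructor
  · intro ζ hζ
    have h1 : eqa ζ (approx P ζ) (unionInterp α hα fun γ _ => approx P γ) :=
      eqa_iff.2 (fun A => union_mat hcoh hζ A)
    have h2 : eqa ζ (unionInterp α hα fun γ _ => approx P γ) (approx P α) := by
      rw [happrox]
      exact eqa_iff.2 fun A => mat_of_sub_lt hζ (iter_from_I hI omega1 A)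
    exact eqa_trans h1 h2
  · rw [happrox]
    exact eqa_iff.2 (iter_omega1_eqa hI)

end Master
section Final

variable {L : Language} {P : Program L}

lemma depth_mem : depth P ∈ {δ : Ordinal | δ < omega1 ∧ ∀ γ, δ ≤ γ → γ < omega1 →
    Ifalse (approx P γ) γ = ∅ ∧ Itrue (approx P γ) γ = ∅} := by
  apply csInf_mem
  -- the set of "active" levels
  set Act : Set Ordinal := {γ | γ < omega1 ∧
    ∃ A : GroundAtom L, (approx P γ A).1 = TVPre.F γ ∨ (approx P γ A).1 = TVPre.T γ}
    with hAct
  have hcnt : Countable Act := by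
    have hchoice : ∀ x : Act, ∃ A : GroundAtom L,
        (approx P x.1 A).1 = TVPre.F x.1 ∨ (approx P x.1 A).1 = TVPre.T x.1 :=
      fun x => x.2.2
    choose g hg using hchoice
    have hinj : Function.Injective g := by
      intro x y hxy
      by_contra hne
      have hne' : x.1 ≠ y.1 := fun hh => hne (Subtype.ext hh)
      have key : ∀ x y : Act, x.1 < y.1 → g x = g y → False := by
        intro x y hlt heq
        have hm := eqa_iff.1 ((approx_master (P := P) y.1 y.2.1).1 x.1 hlt) (g x)
        have hb := mat_eq_of_lo hm (le_refl x.1)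
        have hgy := hg y
        rw [← heq] at hgy
        rcases hg x with hF | hT
        · have h2 := hb.1.1 hF
          rcases hgy with hF' | hT'
          · rw [hF'] at h2; injection h2 with hh; exact (ne_of_lt hlt) hh.symm
          · rw [hT'] at h2; exact absurd h2 (by simp)
        · have h2 := hb.2.1 hT
          rcases hgy with hF' | hT'
          · rw [hF'] at h2; exact absurd h2 (by simp)
          · rw [hT'] at h2; injection h2 with hh; exact (ne_of_lt hlt) hh.symm
      rcases lt_trichotomy x.1 y.1 with h | h | h
      · exact key x y h hxy
      · exact hne' h
      · exact key y x h hxy.symm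
    exact hinj.countable
  -- a strict upper bound for Act below omega1
  have hbound : ∃ b, b < omega1 ∧ ∀ γ ∈ Act, γ ≤ b := by
    rcases isEmpty_or_nonempty Act with hemp | hne
    · exact ⟨0, zero_lt_omega1, fun γ hγ => absurd (Set.Nonempty.to_subtype ⟨γ, hγ⟩) (by
        rw [not_nonempty_iff]; exact hemp)⟩
    · obtain ⟨f, hf⟩ := exists_surjective_nat Act
      have hlt : ∀ n, (f n).1 < (Cardinal.aleph 1).ord := by
        intro n
        have := (f n).2.1
        rwa [show omega1 = (Cardinal.aleph 1).ord from (Cardinal.ord_aleph 1).symm] at this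
      have hsup : iSup (fun n => (f n).1) < (Cardinal.aleph 1).ord := by
          rw [Cardinal.ord_aleph]; exact Ordinal.iSup_lt_omega_one (fun n => (f n).2.1)
      refine ⟨iSup (fun n => (f n).1), ?_, ?_⟩
      · rwa [show omega1 = (Cardinal.aleph 1).ord from (Cardinal.ord_aleph 1).symm]
      · intro γ hγ
        obtain ⟨n, hn⟩ := hf ⟨γ, hγ⟩
        have : (f n).1 = γ := congrArg Subtype.val hn
        rw [← this]
        exact le_ciSup (Ordinal.bddAbove_range _) n
  obtain ⟨b, hb, hub⟩ := hbound
  refine ⟨b + 1, succ_lt_omega1 hb, fun γ hγ hγω => ?_⟩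
  have hnAct : γ ∉ Act := by
    intro hmem
    have := hub γ hmem
    have hlt : b < γ := lt_of_lt_of_le (by
      rw [Ordinal.add_one_eq_succ]; exact Order.lt_succ b) hγ
    exact absurd this (not_le.2 hlt)
  rw [hAct] at hnAct
  simp only [Set.mem_setOf_eq, not_and, not_exists] at hnAct
  have hne := hnAct hγω
  constructor
  · ext A
    simp only [Ifalse, Set.mem_setOf_eq, Set.mem_empty_iff_false, iff_false]
    intro hh
    exact (not_or.1 (hne A)).1 hh
  · ext A
    simp only [Itrue, Set.mem_setOf_eq, Set.mem_empty_iff_false, iff_false]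
    intro hh
    exact (not_or.1 (hne A)).2 hh

lemma eq_of_mat_all {v w : W} (h : ∀ γ, γ < omega1 → mat γ v w) : v = w := by
  rcases W.cases3 v with ⟨a, ha, rfl⟩ | rfl | ⟨a, ha, rfl⟩
  · exact W.ext (((mat_eq_of_lo (h a ha) (le_refl a)).1.1) rfl).symm
  · rcases W.cases3 w with ⟨b, hb, rfl⟩ | rfl | ⟨b, hb, rfl⟩
    · exact absurd ((mat_eq_of_lo (h b hb) (le_refl b)).1.2 rfl) (by simp)
    · rfl
    · exact absurd ((mat_eq_of_lo (h b hb) (le_refl b)).2.2 rfl) (by simp)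
  · exact W.ext (((mat_eq_of_lo (h a ha) (le_refl a)).2.1) rfl).symm

lemma degLT_WF {a h δ} : degLT (WF a h) δ ↔ a < δ := Iff.rfl
lemma degLT_WT {a h δ} : degLT (WT a h) δ ↔ a < δ := Iff.rfl
lemma not_degLT_WZ {δ} : ¬ degLT WZ δ := fun h => h

lemma MP_class_F {β : Ordinal} {B : GroundAtom L} :
    (MP P B).1 = TVPre.F β ↔ (β < depth P ∧ (approx P (depth P) B).1 = TVPre.F β) := by
  have hMP : MP P B = if degLT (approx P (depth P) B) (depth P)
      then approx P (depth P) B else WZ := rfl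
  constructor
  · intro hF
    by_cases hdeg : degLT (approx P (depth P) B) (depth P)
    · rw [hMP, if_pos hdeg] at hF
      refine ⟨?_, hF⟩
      rw [eq_WF_of_fst hF] at hdeg
      exact degLT_WF.1 hdeg
    · rw [hMP, if_neg hdeg] at hF
      exact absurd hF (by simp)
  · rintro ⟨hβ, hval⟩
    have hdeg : degLT (approx P (depth P) B) (depth P) := by
      rw [eq_WF_of_fst hval]
      exact degLT_WF.2 hβ
    rw [hMP, if_pos hdeg]
    exact hval

lemma MP_class_T {β : Ordinal} {B : GroundAtom L} :
    (MP P B).1 = TVPre.T β ↔ (β < depth P ∧ (approx P (depth P) B).1 = TVPre.T β) := by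
  have hMP : MP P B = if degLT (approx P (depth P) B) (depth P)
      then approx P (depth P) B else WZ := rfl
  constructor
  · intro hF
    by_cases hdeg : degLT (approx P (depth P) B) (depth P)
    · rw [hMP, if_pos hdeg] at hF
      refine ⟨?_, hF⟩
      rw [eq_WT_of_fst hF] at hdeg
      exact degLT_WT.1 hdeg
    · rw [hMP, if_neg hdeg] at hF
      exact absurd hF (by simp)
  · rintro ⟨hβ, hval⟩
    have hdeg : degLT (approx P (depth P) B) (depth P) := by
      rw [eq_WT_of_fst hval]
      exact degLT_WT.2 hβ
    rw [hMP, if_pos hdeg]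
    exact hval

lemma MP_mat (hd : depth P < omega1)
    (hds : ∀ γ, depth P ≤ γ → γ < omega1 →
      Ifalse (approx P γ) γ = ∅ ∧ Itrue (approx P γ) γ = ∅)
    {γ : Ordinal} (hγl : depth P ≤ γ) (hγ : γ < omega1) (A : GroundAtom L) :
    mat γ (MP P A) (approx P γ A) := by
  have coh : ∀ β γ', β < γ' → γ' < omega1 →
      ((approx P β A).1 = TVPre.F β ↔ (approx P γ' A).1 = TVPre.F β) ∧
      ((approx P β A).1 = TVPre.T β ↔ (approx P γ' A).1 = TVPre.T β) := by
    intro β γ' hlt hγ'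
    exact mat_eq_of_lo (eqa_iff.1 ((approx_master γ' hγ').1 β hlt) A) (le_refl β)
  have hCF : ∀ β, depth P ≤ β → β < omega1 → (approx P β A).1 ≠ TVPre.F β := by
    intro β h1 h2 hval
    have := (hds β h1 h2).1
    have hmem : A ∈ Ifalse (approx P β) β := hval
    rw [this] at hmem
    exact hmem
  have hCT : ∀ β, depth P ≤ β → β < omega1 → (approx P β A).1 ≠ TVPre.T β := by
    intro β h1 h2 hval
    have := (hds β h1 h2).2
    have hmem : A ∈ Itrue (approx P β) β := hval
    rw [this] at hmem
    exact hmem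
  apply mat_of_classes
  · intro β hβ
    constructor
    · intro hF
      obtain ⟨hβδ, hδval⟩ := MP_class_F.1 hF
      have hβval : (approx P β A).1 = TVPre.F β := (coh β (depth P) hβδ hd).1.2 hδval
      rcases eq_or_lt_of_le hβ with rfl | hlt
      · exact hβval
      · exact (coh β γ hlt hγ).1.1 hβval
    · intro hF
      have hβval : (approx P β A).1 = TVPre.F β := by
        rcases eq_or_lt_of_le hβ with rfl | hlt
        · exact hF
        · exact (coh β γ hlt hγ).1.2 hF
      have hβδ : β < depth P := by
        by_contra hc
        exact hCF β (not_lt.1 hc) (lt_of_le_of_lt hβ hγ) hβval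
      exact MP_class_F.2 ⟨hβδ, (coh β (depth P) hβδ hd).1.1 hβval⟩
  · intro β hβ
    constructor
    · intro hT
      obtain ⟨hβδ, hδval⟩ := MP_class_T.1 hT
      have hβval : (approx P β A).1 = TVPre.T β := (coh β (depth P) hβδ hd).2.2 hδval
      rcases eq_or_lt_of_le hβ with rfl | hlt
      · exact hβval
      · exact (coh β γ hlt hγ).2.1 hβval
    · intro hT
      have hβval : (approx P β A).1 = TVPre.T β := by
        rcases eq_or_lt_of_le hβ with rfl | hlt
        · exact hT
        · exact (coh β γ hlt hγ).2.2 hT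
      have hβδ : β < depth P := by
        by_contra hc
        exact hCT β (not_lt.1 hc) (lt_of_le_of_lt hβ hγ) hβval
      exact MP_class_T.2 ⟨hβδ, (coh β (depth P) hβδ hd).2.1 hβval⟩

lemma MP_big_mat (hd : depth P < omega1)
    (hds : ∀ γ, depth P ≤ γ → γ < omega1 →
      Ifalse (approx P γ) γ = ∅ ∧ Itrue (approx P γ) γ = ∅)
    {γ : Ordinal} (hγl : depth P ≤ γ) (hγ : γ < omega1) (A : GroundAtom L) :
    mat γ (TP P (MP P) A) (MP P A) := by
  have h1 : ∀ B, mat γ (MP P B) (approx P γ B) := fun B => MP_mat hd hds hγl hγ B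
  refine mat_trans (TP_mat P h1 A) ?_
  refine mat_trans (mat_symm (eqa_iff.1 (approx_master γ hγ).2 A)) ?_
  exact mat_symm (h1 A)

end Final

/-- `M_P` is a fixed point of `T_P`. -/
theorem MP_fixed_point {L : Language} (P : Program L) : TP P (MP P) = MP P := by
  obtain ⟨hd, hds⟩ := depth_mem (P := P)
  funext A
  apply eq_of_mat_all
  intro γ hγ
  rcases le_or_gt (depth P) γ with hge | hlt
  · exact MP_big_mat hd hds hge hγ A
  · exact mat_mono (le_of_lt hlt) (MP_big_mat hd hds le_rfl hd A)

end ILP
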